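/- arXiv:1806.07866 — 3 statements merged into one kernel-verified Lean document; each statement's English description precedes it below -/
import Mathlib

section
/- Let ν be a finite positive discrete measure on the unit circle T with infinite support. For any bijection σ: Z → N, the sequence f_n = z^{σ^{-1}(n)} (n ∈ N) is never a Schauder basis of L²(T, ν). -/
open Filter Topology MeasureTheory
open scoped ENNReal NNReal

/-- `f` is a Schauder basis of `H`: every `x` has a unique norm-convergent expansion. -/
def IsSchauderBasis {H : Type*} [NormedAddCommGroup H] [Module ℂ H]
    (f : ℕ → H) : Prop :=
  ∀ x : H, ∃! a : ℕ → ℂ,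
    Tendsto (fun k => ∑ n ∈ Finset.range k, a n • f n) atTop (𝓝 x)

open BoundedContinuousFunction in
theorem basis_bound {H : Type*} [NormedAddCommGroup H] [NormedSpace ℂ H] [CompleteSpace H]
    (F : ℕ → H) (hb : IsSchauderBasis F) :
    ∃ C : ℝ, ∀ p q : ℕ, p < q → ‖F p‖ ≤ C * ‖F p - F q‖ := by
  classical
  let Y : Submodule ℂ (ℕ →ᵇ H) :=
  { carrier := {g | g 0 = 0 ∧ (∀ k, ∃ c : ℂ, g (k+1) = g k + c • F k) ∧ CauchySeq ⇑g}
    add_mem' := by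
      rintro g h ⟨hg0, hgc, hgC⟩ ⟨hh0, hhc, hhC⟩
      refine ⟨by simp [hg0, hh0], fun k => ?_, ?_⟩
      · obtain ⟨c, hc⟩ := hgc k; obtain ⟨d, hd⟩ := hhc k
        exact ⟨c + d, by simp [hc, hd, add_smul]; abel⟩
      · have : ⇑(g + h) = ⇑g + ⇑h := rfl
        rw [this]; exact hgC.add hhC
    zero_mem' := ⟨rfl, fun k => ⟨0, by simp⟩, cauchySeq_const 0⟩
    smul_mem' := by
      rintro c g ⟨hg0, hgc, hgC⟩
      refine ⟨by simp [hg0], fun k => ?_, ?_⟩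
      · obtain ⟨d, hd⟩ := hgc k
        exact ⟨c * d, by simp [hd, smul_smul, smul_add]⟩
      · have : ⇑(c • g) = fun n => c • g n := rfl
        rw [this]
        exact (uniformContinuous_const_smul c).comp_cauchySeq hgC }
  have hYc : IsClosed (Y : Set (ℕ →ᵇ H)) := by
    have h1 : IsClosed {g : ℕ →ᵇ H | g 0 = 0} :=
      isClosed_eq (continuous_eval_const (F := ℕ →ᵇ H) (x := 0)) continuous_const
    have h2 : ∀ k : ℕ, IsClosed {g : ℕ →ᵇ H | ∃ c : ℂ, g (k+1) = g k + c • F k} := by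
      intro k
      have hsp : IsClosed ((Submodule.span ℂ {F k} : Submodule ℂ H) : Set H) :=
        (Submodule.span ℂ {F k}).closed_of_finiteDimensional
      have hco : Continuous fun g : ℕ →ᵇ H => g (k+1) - g k :=
        (continuous_eval_const (F := ℕ →ᵇ H) (x := k+1)).sub
          (continuous_eval_const (F := ℕ →ᵇ H) (x := k))
      have : {g : ℕ →ᵇ H | ∃ c : ℂ, g (k+1) = g k + c • F k}
          = (fun g : ℕ →ᵇ H => g (k+1) - g k) ⁻¹' (Submodule.span ℂ {F k} : Set H) := by
        ext g
        simp only [Set.mem_setOf_eq, Set.mem_preimage, SetLike.mem_coe,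
          Submodule.mem_span_singleton]
        constructor
        · rintro ⟨c, hc⟩; exact ⟨c, by rw [hc]; abel⟩
        · rintro ⟨c, hc⟩; exact ⟨c, by rw [hc]; abel⟩
      rw [this]
      exact hsp.preimage hco
    have h3 : IsClosed {g : ℕ →ᵇ H | CauchySeq ⇑g} := by
      refine IsSeqClosed.isClosed ?_
      intro u g hu hug
      rw [Set.mem_setOf_eq, Metric.cauchySeq_iff]
      intro ε hε
      obtain ⟨m, hm⟩ := (Metric.tendsto_atTop.mp hug) (ε/3) (by positivity)
      have hm' : dist (u m) g < ε/3 := hm m le_rfl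
      obtain ⟨N, hN⟩ := Metric.cauchySeq_iff.mp (hu m) (ε/3) (by positivity)
      refine ⟨N, fun i hi j hj => ?_⟩
      have e1 : dist (g i) (u m i) ≤ dist (u m) g := by
        rw [dist_comm (g i)]; exact BoundedContinuousFunction.dist_coe_le_dist i
      have e2 : dist (u m j) (g j) ≤ dist (u m) g :=
        BoundedContinuousFunction.dist_coe_le_dist j
      calc dist (g i) (g j) ≤ dist (g i) (u m i) + dist (u m i) (u m j) + dist (u m j) (g j) :=
            dist_triangle4 _ _ _ _
        _ < ε/3 + ε/3 + ε/3 := by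
            have := hN i hi j hj
            have h1 : dist (g i) (u m i) < ε/3 := lt_of_le_of_lt e1 hm'
            have h2 : dist (u m j) (g j) < ε/3 := lt_of_le_of_lt e2 hm'
            linarith
        _ = ε := by ring
    have : (Y : Set (ℕ →ᵇ H)) = {g : ℕ →ᵇ H | g 0 = 0} ∩
        ((⋂ k, {g : ℕ →ᵇ H | ∃ c : ℂ, g (k+1) = g k + c • F k}) ∩ {g : ℕ →ᵇ H | CauchySeq ⇑g}) := by
      ext g
      simp only [Set.mem_inter_iff, Set.mem_iInter, Set.mem_setOf_eq]
      rfl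
    rw [this]
    exact h1.inter ((isClosed_iInter h2).inter h3)
  haveI : CompleteSpace Y := hYc.completeSpace_coe
  -- properties of elements of Y
  have mem0 : ∀ g : Y, (g : ℕ →ᵇ H) 0 = 0 := fun g => g.2.1
  have memc : ∀ g : Y, ∀ k, ∃ c : ℂ, (g : ℕ →ᵇ H) (k+1) = (g : ℕ →ᵇ H) k + c • F k :=
    fun g => g.2.2.1
  have memC : ∀ g : Y, CauchySeq ⇑(g : ℕ →ᵇ H) := fun g => g.2.2.2
  have hlim : ∀ g : Y, Tendsto ⇑(g : ℕ →ᵇ H) atTop (𝓝 (limUnder atTop ⇑(g : ℕ →ᵇ H))) :=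
    fun g => (memC g).tendsto_limUnder
  let L : Y →ₗ[ℂ] H :=
  { toFun := fun g => limUnder atTop ⇑(g : ℕ →ᵇ H)
    map_add' := fun g h => by
      have : Tendsto ⇑((g : ℕ →ᵇ H) + (h : ℕ →ᵇ H)) atTop
          (𝓝 (limUnder atTop ⇑(g : ℕ →ᵇ H) + limUnder atTop ⇑(h : ℕ →ᵇ H))) := by
        have := (hlim g).add (hlim h)
        exact this.congr (fun n => rfl)
      exact this.limUnder_eq
    map_smul' := fun c g => by
      have : Tendsto ⇑(c • (g : ℕ →ᵇ H)) atTop (𝓝 (c • limUnder atTop ⇑(g : ℕ →ᵇ H))) := by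
        have := (hlim g).const_smul c
        exact this.congr (fun n => rfl)
      exact this.limUnder_eq }
  have hL : ∀ g : Y, ‖L g‖ ≤ 1 * ‖g‖ := by
    intro g
    rw [one_mul]
    refine le_of_tendsto' (hlim g).norm (fun k => ?_)
    exact BoundedContinuousFunction.norm_coe_le_norm _ k
  let T : Y →L[ℂ] H := L.mkContinuous 1 hL
  have hT : ∀ g : Y, Tendsto ⇑(g : ℕ →ᵇ H) atTop (𝓝 (T g)) := fun g => hlim g
  -- partial sums description
  have hsum : ∀ g : Y, ∀ k, (g : ℕ →ᵇ H) k
      = ∑ n ∈ Finset.range k, (fun m => (memc g m).choose) n • F n := by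
    intro g k
    induction k with
    | zero => simpa using mem0 g
    | succ k ih =>
      rw [Finset.sum_range_succ, ← ih]
      exact (memc g k).choose_spec
  -- injectivity
  have hker : LinearMap.ker (T : Y →ₗ[ℂ] H) = ⊥ := by
    rw [LinearMap.ker_eq_bot']
    intro g hg
    obtain ⟨a0, _, hun⟩ := hb 0
    have h1 : Tendsto (fun k => ∑ n ∈ Finset.range k,
        (fun m => (memc g m).choose) n • F n) atTop (𝓝 0) := by
      have := hT g
      rw [show T g = 0 from hg] at this
      exact this.congr (fun k => hsum g k)
    have h2 : Tendsto (fun k => ∑ n ∈ Finset.range k, (0:ℂ) • F n) atTop (𝓝 (0:H)) := by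
      simpa using (tendsto_const_nhds : Tendsto (fun _ : ℕ => (0:H)) atTop (𝓝 0))
    have hc0 : (fun m => (memc g m).choose) = fun _ => (0:ℂ) := (hun _ h1).trans (hun _ h2).symm
    have : ∀ k, (g : ℕ →ᵇ H) k = 0 := by
      intro k; rw [hsum g k, hc0]; simp
    ext1
    ext1 k
    simpa using this k
  -- surjectivity
  have hrange : LinearMap.range (T : Y →ₗ[ℂ] H) = ⊤ := by
    rw [LinearMap.range_eq_top]
    intro x
    obtain ⟨a, ha, -⟩ := hb x
    have hCauchy : CauchySeq (fun k => ∑ n ∈ Finset.range k, a n • F n) := ha.cauchySeq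
    obtain ⟨R, hR⟩ := hCauchy.isBounded_range.exists_norm_le
    have hRb : ∀ k, ‖∑ n ∈ Finset.range k, a n • F n‖ ≤ R := fun k =>
      hR _ (Set.mem_range_self k)
    let gb : ℕ →ᵇ H := BoundedContinuousFunction.ofNormedAddCommGroup
      (fun k => ∑ n ∈ Finset.range k, a n • F n) (continuous_of_discreteTopology) R hRb
    have hgb : ∀ k, gb k = ∑ n ∈ Finset.range k, a n • F n := fun k => rfl
    have hmem : gb ∈ Y := by
      refine ⟨by simp [hgb], fun k => ⟨a k, ?_⟩, ?_⟩
      · rw [hgb, hgb, Finset.sum_range_succ]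
      · exact hCauchy
    refine ⟨⟨gb, hmem⟩, ?_⟩
    have h1 : Tendsto ⇑gb atTop (𝓝 (T ⟨gb, hmem⟩)) := hT ⟨gb, hmem⟩
    have h2 : Tendsto ⇑gb atTop (𝓝 x) := ha.congr (fun k => (hgb k).symm)
    exact tendsto_nhds_unique h1 h2
  -- the Banach isomorphism
  set e := ContinuousLinearEquiv.ofBijective T hker hrange with he
  refine ⟨‖(e.symm : H →L[ℂ] Y)‖, fun p q hpq => ?_⟩
  classical
  let h : ℕ → H := fun k => if k ≤ p then 0 else if k ≤ q then F p else F p - F q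
  have hbd : ∀ k, ‖h k‖ ≤ ‖F p‖ + ‖F p - F q‖ := by
    intro k
    by_cases h1 : k ≤ p
    · simp only [h, if_pos h1, norm_zero]; positivity
    · by_cases h2 : k ≤ q
      · simp only [h, if_neg h1, if_pos h2]
        exact le_add_of_nonneg_right (norm_nonneg _)
      · simp only [h, if_neg h1, if_neg h2]
        exact le_add_of_nonneg_left (norm_nonneg _)
  let gb : ℕ →ᵇ H := BoundedContinuousFunction.ofNormedAddCommGroup h
    continuous_of_discreteTopology _ hbd
  have hgbk : ∀ k, gb k = h k := fun k => rfl
  have htend : Tendsto ⇑gb atTop (𝓝 (F p - F q)) := by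
    refine tendsto_const_nhds.congr' ?_
    filter_upwards [eventually_ge_atTop (q+1)] with k hk
    simp only [hgbk, h, if_neg (by omega : ¬ k ≤ p), if_neg (by omega : ¬ k ≤ q)]
  have hmem : gb ∈ Y := by
    refine ⟨by simp [hgbk, h], fun k => ?_, htend.cauchySeq⟩
    · rcases Nat.lt_trichotomy k p with hk | hk | hk
      · refine ⟨0, ?_⟩
        simp only [hgbk, h, if_pos (by omega : k ≤ p), if_pos (by omega : k+1 ≤ p), zero_smul,
          add_zero]
      · subst hk
        refine ⟨1, ?_⟩
        simp [hgbk, h, (by omega : ¬ k+1 ≤ k), (by omega : k+1 ≤ q)]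
      · rcases Nat.lt_trichotomy k q with hk2 | hk2 | hk2
        · refine ⟨0, ?_⟩
          simp only [hgbk, h, if_neg (by omega : ¬ k ≤ p), if_neg (by omega : ¬ k+1 ≤ p),
            if_pos (by omega : k ≤ q), if_pos (by omega : k+1 ≤ q), zero_smul, add_zero]
        · subst hk2
          refine ⟨-1, ?_⟩
          simp only [hgbk, h, if_neg (by omega : ¬ k+1 ≤ p), if_neg (by omega : ¬ k+1 ≤ k),
            if_neg (by omega : ¬ k ≤ p), if_pos (le_refl k), neg_smul, one_smul]
          abel
        · refine ⟨0, ?_⟩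
          simp only [hgbk, h, if_neg (by omega : ¬ k ≤ p), if_neg (by omega : ¬ k+1 ≤ p),
            if_neg (by omega : ¬ k ≤ q), if_neg (by omega : ¬ k+1 ≤ q), zero_smul, add_zero]
  have hTg : T ⟨gb, hmem⟩ = F p - F q := tendsto_nhds_unique (hT ⟨gb, hmem⟩) htend
  have key : ‖(⟨gb, hmem⟩ : Y)‖ ≤ ‖(e.symm : H →L[ℂ] Y)‖ * ‖F p - F q‖ := by
    have h1 : (⟨gb, hmem⟩ : Y) = e.symm (F p - F q) := by
      rw [← hTg]
      exact (ContinuousLinearEquiv.ofBijective_symm_apply_apply T hker hrange _).symm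
    rw [h1]
    exact (e.symm : H →L[ℂ] Y).le_opNorm _
  have hlow : ‖F p‖ ≤ ‖(⟨gb, hmem⟩ : Y)‖ := by
    have h2 := BoundedContinuousFunction.norm_coe_le_norm gb (p+1)
    have h3 : gb (p+1) = F p := by
      simp [hgbk, h, (by omega : ¬ p+1 ≤ p), (by omega : p+1 ≤ q)]
    rw [h3] at h2
    exact h2
  linarith

theorem exists_good_power (t : Finset ℂ) (ht : ∀ z ∈ t, ‖z‖ = 1) {ε : ℝ} (hε : 0 < ε)
    (B : Finset ℤ) :
    ∃ b : ℤ, b ∉ B ∧ ∀ z ∈ t, ‖z ^ b - 1‖ < ε := by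
  classical
  set M : ℕ := B.sup Int.natAbs + 1 with hM
  let f : ℕ → ({ z // z ∈ t } → ℂ) := fun j z => (z : ℂ) ^ (j * M)
  have hfK : ∀ j, f j ∈ Metric.closedBall (0 : { z // z ∈ t } → ℂ) 1 := by
    intro j
    rw [Metric.mem_closedBall, dist_zero_right]
    refine (pi_norm_le_iff_of_nonneg zero_le_one).mpr fun z => ?_
    simp only [f]
    rw [norm_pow, ht z z.2, one_pow]
  have hK : IsCompact (Metric.closedBall (0 : { z // z ∈ t } → ℂ) 1) :=
    isCompact_closedBall _ _
  obtain ⟨c, hcfin, hcover⟩ := Metric.totallyBounded_iff.mp hK.totallyBounded (ε/2) (half_pos hε)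
  have hchoice : ∀ j : ℕ, ∃ y ∈ c, f j ∈ Metric.ball y (ε/2) := by
    intro j
    have := hcover (hfK j)
    simpa using this
  choose y hyc hyb using hchoice
  haveI : Finite c := hcfin.to_subtype
  obtain ⟨j, j', hne, heq⟩ := Finite.exists_ne_map_eq_of_infinite
    (fun j : ℕ => (⟨y j, hyc j⟩ : c))
  have hyy : y j = y j' := congrArg Subtype.val heq
  have hdist : ∀ i i' : ℕ, y i = y i' → dist (f i) (f i') < ε := by
    intro i i' hy
    calc dist (f i) (f i') ≤ dist (f i) (y i) + dist (y i) (f i') := dist_triangle _ _ _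
      _ < ε/2 + ε/2 := by
          refine add_lt_add (hyb i) ?_
          rw [hy, dist_comm]
          exact hyb i'
      _ = ε := by ring
  -- wlog j < j'
  have main : ∀ i i' : ℕ, i < i' → dist (f i) (f i') < ε →
      ∃ b : ℤ, b ∉ B ∧ ∀ z ∈ t, ‖z ^ b - 1‖ < ε := by
    intro i i' hii hd
    refine ⟨(((i' - i) * M : ℕ) : ℤ), ?_, ?_⟩
    · intro hmem
      have h1 : (((((i' - i) * M : ℕ) : ℤ)).natAbs) ≤ B.sup Int.natAbs := Finset.le_sup hmem
      rw [Int.natAbs_natCast] at h1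
      have h2 : M ≤ (i' - i) * M := Nat.le_mul_of_pos_left M (by omega)
      omega
    · intro z hzt
      have hz1 : ‖z‖ = 1 := ht z hzt
      have key : z ^ (i' * M) - z ^ (i * M) = z ^ (i * M) * (z ^ ((i' - i) * M) - 1) := by
        rw [mul_sub, mul_one, ← pow_add]
        congr 1
        rw [← Nat.add_mul, Nat.add_sub_cancel' hii.le]
      have hnorm : ‖z ^ ((i' - i) * M) - 1‖ = ‖z ^ (i' * M) - z ^ (i * M)‖ := by
        rw [key, norm_mul, norm_pow, hz1, one_pow, one_mul]
      have hcoord : ‖z ^ (i' * M) - z ^ (i * M)‖ ≤ dist (f i') (f i) := by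
        have h3 := norm_le_pi_norm (f i' - f i) (⟨z, hzt⟩ : { z // z ∈ t })
        simpa [f, dist_eq_norm] using h3
      rw [zpow_natCast, hnorm]
      calc ‖z ^ (i' * M) - z ^ (i * M)‖ ≤ dist (f i') (f i) := hcoord
        _ < ε := by rw [dist_comm]; exact hd
  rcases hne.lt_or_gt with h | h
  · exact main j j' h (hdist j j' hyy)
  · exact main j' j h (hdist j' j hyy.symm)

theorem small_tail (ν : Measure ℂ) [IsFiniteMeasure ν] (s : Set ℂ) (hs : s.Countable)
    {δ : ENNReal} (hδ : 0 < δ) :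
    ∃ t : Finset ℂ, ↑t ⊆ s ∧ ν (s \ ↑t) < δ := by
  classical
  rcases s.eq_empty_or_nonempty with rfl | hne
  · exact ⟨∅, by simp, by simpa using hδ⟩
  obtain ⟨e, hes⟩ := Set.Countable.exists_eq_range hs hne
  subst hes
  set A : ℕ → Set ℂ := fun n => Set.range e \ ↑((Finset.range n).image e) with hA
  have hmeas : ∀ n, MeasurableSet (A n) := by
    intro n
    exact (hs.measurableSet).diff ((Finset.range n).image e).finite_toSet.measurableSet
  have hanti : Antitone A := by
    intro m n hmn
    apply Set.diff_subset_diff_right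
    intro x hx
    simp only [Finset.coe_image, Set.mem_image, Finset.mem_coe, Finset.mem_range] at hx ⊢
    obtain ⟨i, hi, rfl⟩ := hx
    exact ⟨i, by omega, rfl⟩
  have hinter : ⋂ n, A n = ∅ := by
    ext x
    simp only [Set.mem_iInter, Set.mem_empty_iff_false, iff_false, not_forall]
    by_cases hx : x ∈ Set.range e
    · obtain ⟨i, rfl⟩ := hx
      refine ⟨i + 1, fun hmem => hmem.2 ?_⟩
      simp only [Finset.coe_image, Set.mem_image, Finset.mem_coe, Finset.mem_range]
      exact ⟨i, by omega, rfl⟩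
    · exact ⟨0, fun hmem => hx hmem.1⟩
  have htend : Tendsto (ν ∘ A) atTop (𝓝 0) := by
    have := tendsto_measure_iInter_atTop (μ := ν) (fun n => (hmeas n).nullMeasurableSet)
      hanti ⟨0, measure_ne_top ν _⟩
    rwa [hinter, measure_empty] at this
  obtain ⟨n, hn⟩ := (htend.eventually_lt_const hδ).exists
  exact ⟨(Finset.range n).image e, by
    intro x hx
    simp only [Finset.coe_image, Set.mem_image, Finset.mem_coe, Finset.mem_range] at hx
    obtain ⟨i, _, rfl⟩ := hx
    exact Set.mem_range_self i, hn⟩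

theorem approx (ν : Measure ℂ) [IsFiniteMeasure ν] (s : Set ℂ) (hs : s.Countable)
    (hcirc : s ⊆ {z : ℂ | ‖z‖ = 1}) (hnull : ν sᶜ = 0)
    (σ : ℤ ≃ ℕ) (F : ℕ → Lp ℂ 2 ν)
    (hF : ∀ n, ⇑(F n) =ᵐ[ν] fun z : ℂ => z ^ (σ.symm n))
    {ε : ℝ} (hε : 0 < ε) (N : ℕ) :
    ∃ b : ℤ, N ≤ σ b ∧ ‖F (σ b) - F (σ 0)‖ < ε := by
  classical
  have hae : ∀ᵐ z ∂ν, z ∈ s := mem_ae_iff.mpr hnull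
  set R : ENNReal := ν Set.univ ^ (2:ℝ≥0∞).toReal⁻¹ with hR
  have hRne : R ≠ ⊤ := by
    refine ENNReal.rpow_ne_top_of_nonneg (by norm_num) (measure_ne_top ν _)
  set ε₁ : ℝ := (ε/4) / (R.toReal + 1) with hε₁def
  have hε₁ : 0 < ε₁ := by
    apply div_pos (by linarith)
    have := ENNReal.toReal_nonneg (a := R)
    linarith
  obtain ⟨t, hts, htδ⟩ := small_tail ν s hs (δ := ENNReal.ofReal ((ε/8)^2))
    (by positivity)
  set B : Finset ℤ := (Finset.range N).image σ.symm with hB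
  obtain ⟨b, hbB, hbsmall⟩ := exists_good_power t (fun z hz => hcirc (hts hz)) hε₁ B
  refine ⟨b, ?_, ?_⟩
  · by_contra hlt
    push_neg at hlt
    exact hbB (by
      rw [hB]
      simp only [Finset.mem_image, Finset.mem_range]
      exact ⟨σ b, hlt, σ.symm_apply_apply b⟩)
  · set f : ℂ → ℂ := fun z => z ^ b - 1 with hf
    have h1 : ⇑(F (σ b) - F (σ 0)) =ᵐ[ν] f := by
      have hFb : ⇑(F (σ b)) =ᵐ[ν] fun z : ℂ => z ^ b := by
        have := hF (σ b)
        simpa using this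
      have hF0 : ⇑(F (σ 0)) =ᵐ[ν] fun _ : ℂ => (1:ℂ) := by
        have := hF (σ 0)
        refine this.trans (Filter.Eventually.of_forall fun z => ?_)
        simp
      exact (Lp.coeFn_sub (F (σ b)) (F (σ 0))).trans (hFb.sub hF0)
    have hfm : AEStronglyMeasurable f ν := (Lp.aestronglyMeasurable _).congr h1
    set u : Set ℂ := (↑t : Set ℂ) with hu
    have humeas : MeasurableSet u := t.finite_toSet.measurableSet
    -- piece 1
    have P1 : eLpNorm (u.indicator f) 2 ν ≤ ENNReal.ofReal (ε/4) := by
      have hb1 : ∀ᵐ z ∂ν, ‖u.indicator f z‖ ≤ ε₁ := by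
        filter_upwards [hae] with z _
        by_cases hzu : z ∈ u
        · rw [Set.indicator_of_mem hzu]
          exact (hbsmall z (Finset.mem_coe.mp hzu)).le
        · rw [Set.indicator_of_notMem hzu, norm_zero]
          exact hε₁.le
      refine (eLpNorm_le_of_ae_bound hb1).trans ?_
      have e1 : ν Set.univ ^ (2:ℝ≥0∞).toReal⁻¹ * ENNReal.ofReal ε₁
          = ENNReal.ofReal (R.toReal * ε₁) := by
        rw [ENNReal.ofReal_mul ENNReal.toReal_nonneg, ENNReal.ofReal_toReal hRne, hR]
      rw [e1]
      apply ENNReal.ofReal_le_ofReal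
      have h9 : 0 < R.toReal + 1 := by positivity
      have e2 : R.toReal * ε₁ = (R.toReal * (ε/4))/(R.toReal+1) := by
        rw [hε₁def]; ring
      rw [e2, div_le_iff₀ h9]
      nlinarith [ENNReal.toReal_nonneg (a := R)]
    -- piece 2
    have P2 : eLpNorm (uᶜ.indicator f) 2 ν ≤ ENNReal.ofReal (ε/4) := by
      have hb2 : ∀ᵐ z ∂ν, ‖uᶜ.indicator f z‖ ≤ ‖uᶜ.indicator (fun _ => (2:ℝ)) z‖ := by
        filter_upwards [hae] with z hz
        by_cases hzu : z ∈ uᶜ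
        · rw [Set.indicator_of_mem hzu, Set.indicator_of_mem hzu]
          have hz1 : ‖z‖ = 1 := hcirc hz
          have : ‖f z‖ ≤ ‖z ^ b‖ + ‖(1:ℂ)‖ := norm_sub_le _ _
          rw [norm_zpow, hz1, one_zpow] at this
          have h3 : ‖f z‖ ≤ 2 := by
            simp only [norm_one] at this
            linarith
          have h2 : ‖(2:ℝ)‖ = 2 := by norm_num
          rw [h2]
          exact h3
        · rw [Set.indicator_of_notMem hzu, Set.indicator_of_notMem hzu]
          simp
      refine (eLpNorm_mono_ae hb2).trans ?_
      refine (eLpNorm_indicator_const_le (2:ℝ) 2).trans ?_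
      have hνuc : ν uᶜ ≤ ENNReal.ofReal ((ε/8)^2) := by
        have hsub : uᶜ ⊆ (s \ u) ∪ sᶜ := by
          intro z hz
          by_cases hzs : z ∈ s
          · exact Or.inl ⟨hzs, hz⟩
          · exact Or.inr hzs
        calc ν uᶜ ≤ ν ((s \ u) ∪ sᶜ) := measure_mono hsub
          _ ≤ ν (s \ u) + ν sᶜ := measure_union_le _ _
          _ = ν (s \ u) := by rw [hnull, add_zero]
          _ ≤ ENNReal.ofReal ((ε/8)^2) := htδ.le
      have hrp : ν uᶜ ^ (1/(2:ℝ≥0∞).toReal) ≤ ENNReal.ofReal (ε/8) := by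
        have e3 : (ENNReal.ofReal ((ε/8)^2)) ^ (1/(2:ℝ≥0∞).toReal) = ENNReal.ofReal (ε/8) := by
          rw [ENNReal.ofReal_rpow_of_nonneg (by positivity) (by norm_num)]
          congr 1
          have : (1/(2:ℝ≥0∞).toReal) = (1/2 : ℝ) := by norm_num
          rw [this, ← Real.rpow_natCast (ε/8) 2, ← Real.rpow_mul (by positivity)]
          norm_num
        rw [← e3]
        exact ENNReal.rpow_le_rpow hνuc (by norm_num)
      calc (‖(2:ℝ)‖₊ : ENNReal) * ν uᶜ ^ (1/(2:ℝ≥0∞).toReal)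
          ≤ (‖(2:ℝ)‖₊ : ENNReal) * ENNReal.ofReal (ε/8) := by
            exact mul_le_mul_right hrp _
        _ = ENNReal.ofReal (ε/4) := by
            have : (‖(2:ℝ)‖₊ : ENNReal) = ENNReal.ofReal 2 := by
              simp [Real.nnnorm_ofNat]
            rw [this, ← ENNReal.ofReal_mul (by norm_num)]
            congr 1
            ring
    -- combine
    have htot : eLpNorm f 2 ν ≤ ENNReal.ofReal (ε/2) := by
      have hsplit : f = u.indicator f + uᶜ.indicator f := (Set.indicator_self_add_compl u f).symm
      calc eLpNorm f 2 ν = eLpNorm (u.indicator f + uᶜ.indicator f) 2 ν := by rw [← hsplit]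
        _ ≤ eLpNorm (u.indicator f) 2 ν + eLpNorm (uᶜ.indicator f) 2 ν :=
            eLpNorm_add_le (hfm.indicator humeas) (hfm.indicator humeas.compl) one_le_two
        _ ≤ ENNReal.ofReal (ε/4) + ENNReal.ofReal (ε/4) := add_le_add P1 P2
        _ = ENNReal.ofReal (ε/2) := by
            rw [← ENNReal.ofReal_add (by positivity) (by positivity)]
            congr 1
            ring
    rw [Lp.norm_def, eLpNorm_congr_ae h1]
    have hfin : eLpNorm f 2 ν ≠ ⊤ := ne_top_of_le_ne_top ENNReal.ofReal_ne_top htot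
    calc (eLpNorm f 2 ν).toReal ≤ (ENNReal.ofReal (ε/2)).toReal :=
          (ENNReal.toReal_le_toReal hfin ENNReal.ofReal_ne_top).mpr htot
      _ = ε/2 := ENNReal.toReal_ofReal (by positivity)
      _ < ε := by linarith

/-- For a finite discrete measure `ν` on the unit circle with infinite support and any
bijection `σ : ℤ ≃ ℕ`, the sequence `n ↦ z ^ σ⁻¹(n)` is never a Schauder basis of `L²(ν)`. -/
theorem zpow_never_schauder_basis (ν : Measure ℂ) [IsFiniteMeasure ν]
    (hdiscrete : ∃ s : Set ℂ, s.Countable ∧ s ⊆ {z : ℂ | ‖z‖ = 1} ∧ ν sᶜ = 0)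
    (hinf : {z : ℂ | ν {z} ≠ 0}.Infinite)
    (σ : ℤ ≃ ℕ) (F : ℕ → Lp ℂ 2 ν)
    (hF : ∀ n, ⇑(F n) =ᵐ[ν] fun z : ℂ => z ^ (σ.symm n)) :
    ¬ IsSchauderBasis F := by
  intro hbasis
  obtain ⟨s, hs, hcirc, hnull⟩ := hdiscrete
  obtain ⟨C, hC⟩ := basis_bound F hbasis
  have hν0 : ν ≠ 0 := by
    obtain ⟨z, hz⟩ := hinf.nonempty
    intro h0
    exact hz (by simp [h0])
  have hF0 : ⇑(F (σ 0)) =ᵐ[ν] fun _ : ℂ => (1:ℂ) := by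
    refine (hF (σ 0)).trans (Filter.Eventually.of_forall fun z => ?_)
    simp
  have hr : 0 < ‖F (σ 0)‖ := by
    by_contra hcon
    push_neg at hcon
    have h0 : F (σ 0) = 0 := norm_eq_zero.mp (le_antisymm hcon (norm_nonneg _))
    have h2 : (fun _ : ℂ => (1:ℂ)) =ᵐ[ν] (fun _ : ℂ => (0:ℂ)) := by
      refine hF0.symm.trans ?_
      rw [h0]
      exact Lp.coeFn_zero ℂ 2 ν
    have h4 : ∀ᵐ z ∂ν, False := h2.mono (fun z hz => by simpa using hz)
    have h3 : ν Set.univ = 0 := by simpa [ae_iff] using h4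
    exact hν0 (Measure.measure_univ_eq_zero.mp h3)
  set ε : ℝ := ‖F (σ 0)‖ / (|C| + 1) with hεdef
  have hεpos : 0 < ε := div_pos hr (by positivity)
  obtain ⟨b, hbN, hbsmall⟩ := approx ν s hs hcirc hnull σ F hF hεpos (σ 0 + 1)
  have hlt : σ 0 < σ b := by omega
  have h1 := hC (σ 0) (σ b) hlt
  have h2 : ‖F (σ 0) - F (σ b)‖ < ε := by rw [norm_sub_rev]; exact hbsmall
  have h5 : C * ‖F (σ 0) - F (σ b)‖ ≤ |C| * ‖F (σ 0) - F (σ b)‖ :=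
    mul_le_mul_of_nonneg_right (le_abs_self C) (norm_nonneg _)
  have h6 : ‖F (σ 0) - F (σ b)‖ * (|C| + 1) < ‖F (σ 0)‖ := by
    rw [← lt_div_iff₀ (by positivity : (0:ℝ) < |C| + 1)]
    exact h2
  nlinarith [norm_nonneg (F (σ 0) - F (σ b)), abs_nonneg C]
end

section
/- Let ν be a finite positive discrete measure on the unit circle T with infinite support, f ∈ L²(T, ν), and σ: Z → N a bijection. Then the sequence f_n = z^{σ^{-1}(n)} · f (n ∈ N) is never a Schauder basis of L²(T, ν). -/
open Filter Topology MeasureTheory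
open scoped ENNReal NNReal

set_option maxHeartbeats 1000000
set_option synthInstance.maxHeartbeats 400000

lemma exists_large_return (u : Finset ℂ) (hu : ∀ t ∈ u, ‖t‖ = 1) {δ : ℝ} (hδ : 0 < δ) (N : ℕ) :
    ∃ r : ℕ, N < r ∧ ∀ t ∈ u, ‖t ^ r - (1:ℂ)‖ < δ := by
  set v : ℕ → (u → ℂ) := fun n t => (t : ℂ) ^ n with hv
  have hmem : ∀ n, v n ∈ Metric.closedBall (0 : u → ℂ) 1 := by
    intro n
    rw [Metric.mem_closedBall, dist_zero_right]
    refine (pi_norm_le_iff_of_nonneg zero_le_one).2 fun t => ?_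
    simp [hv, norm_pow, hu t t.2]
  obtain ⟨L, -, φ, hφ, hconv⟩ :=
    (isCompact_closedBall (0 : u → ℂ) 1).tendsto_subseq hmem
  have hC := hconv.cauchySeq
  obtain ⟨I, hI⟩ := Metric.cauchySeq_iff'.1 hC δ hδ
  have hle : ∀ k, φ I + k ≤ φ (I + k) := by
    intro k; induction k with
    | zero => simp
    | succ k ih => exact Nat.succ_le_of_lt (lt_of_le_of_lt ih (hφ (by omega)))
  refine ⟨φ (I + (N + 1)) - φ I, by have := hle (N + 1); omega, ?_⟩
  intro t ht
  have hd := hI (I + (N + 1)) (by omega)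
  have htn : ∀ m : ℕ, ‖(t : ℂ) ^ m‖ = 1 := fun m => by
    rw [norm_pow, hu t ht, one_pow]
  have key : ‖t ^ (φ (I + (N+1)) - φ I) - (1:ℂ)‖
      = ‖t ^ (φ (I + (N+1))) - t ^ (φ I)‖ := by
    have : t ^ (φ (I + (N+1))) = t ^ (φ I) * t ^ (φ (I + (N+1)) - φ I) := by
      rw [← pow_add]
      congr 1
      have := hle (N + 1); omega
    rw [this]
    have h2 : t ^ φ I * t ^ (φ (I + (N+1)) - φ I) - t ^ φ I
        = t ^ φ I * (t ^ (φ (I + (N+1)) - φ I) - 1) := by ring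
    rw [h2, norm_mul, htn, one_mul]
  rw [key]
  calc ‖t ^ (φ (I + (N+1))) - t ^ (φ I)‖
      = dist (v (φ (I + (N+1))) ⟨t, ht⟩) (v (φ I) ⟨t, ht⟩) := by
        simp [v, dist_eq_norm]
    _ ≤ dist (v (φ (I + (N+1)))) (v (φ I)) := dist_le_pi_dist _ _ _
    _ < δ := hd

lemma exists_finset_compl_small (μ : Measure ℂ) [IsFiniteMeasure μ] {s : Set ℂ}
    (hs : s.Countable) (hsc : μ sᶜ = 0) {ε : ℝ≥0∞} (hε : 0 < ε) :
    ∃ u : Finset ℂ, ↑u ⊆ s ∧ μ ((↑u : Set ℂ)ᶜ) < ε := by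
  rcases s.eq_empty_or_nonempty with rfl | hne
  · exact ⟨∅, by simp, by simpa using hsc.trans_lt hε⟩
  obtain ⟨e, rfl⟩ := Set.Countable.exists_eq_range hs hne
  set B : ℕ → Set ℂ := fun n => ((↑((Finset.range n).image e) : Set ℂ))ᶜ with hB
  have hmeas : ∀ n, NullMeasurableSet (B n) μ :=
    fun n => (((Finset.range n).image e).measurableSet.compl).nullMeasurableSet
  have hanti : Antitone B := by
    intro m n hmn
    apply Set.compl_subset_compl.2
    intro x hx
    simp only [Finset.coe_image, Finset.coe_range] at *
    obtain ⟨k, hk, rfl⟩ := hx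
    exact ⟨k, lt_of_lt_of_le hk hmn, rfl⟩
  have hlim : Tendsto (μ ∘ B) atTop (𝓝 (μ (⋂ n, B n))) :=
    MeasureTheory.tendsto_measure_iInter_atTop hmeas hanti ⟨0, measure_ne_top μ _⟩
  have hInter : (⋂ n, B n) = (Set.range e)ᶜ := by
    rw [← Set.compl_iUnion]
    congr 1
    ext x
    simp only [Set.mem_iUnion, Finset.coe_image, Finset.coe_range, Set.mem_image,
      Set.mem_Iio, Set.mem_range]
    constructor
    · rintro ⟨n, k, -, rfl⟩; exact ⟨k, rfl⟩
    · rintro ⟨k, rfl⟩; exact ⟨k + 1, k, by omega, rfl⟩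
  rw [hInter, hsc] at hlim
  obtain ⟨n, hn⟩ := (hlim.eventually_lt_const hε).exists
  exact ⟨(Finset.range n).image e, by
    intro x hx
    simp only [Finset.coe_image, Finset.coe_range] at hx
    obtain ⟨k, -, rfl⟩ := hx
    exact ⟨k, rfl⟩, hn⟩

lemma exists_large_small_diff (ν : Measure ℂ) [IsFiniteMeasure ν] {s : Set ℂ}
    (hs : s.Countable) (hcirc : s ⊆ {z : ℂ | ‖z‖ = 1}) (hνs : ν sᶜ = 0)
    (f : Lp ℂ 2 ν) {ε : ℝ} (hε : 0 < ε) (N : ℕ) :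
    ∃ r : ℕ, N < r ∧
      eLpNorm (fun z : ℂ => (z ^ r - 1) * f z) 2 ν < ENNReal.ofReal ε := by
  classical
  set d : ℂ → ℝ≥0∞ := fun z => (‖f z‖₊ : ℝ≥0∞) ^ (2 : ℕ) with hd_def
  have hd : AEMeasurable d ν := ((Lp.aestronglyMeasurable f).enorm).pow_const 2
  set μ : Measure ℂ := ν.withDensity d with hμ_def
  have hμs : μ sᶜ = 0 := by
    rw [hμ_def, withDensity_apply _ hs.measurableSet.compl]
    exact setLIntegral_measure_zero _ _ hνs
  have hlt : ∫⁻ z, d z ∂ν < ⊤ := by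
    have h1 := Lp.eLpNorm_lt_top f
    rw [eLpNorm_eq_lintegral_rpow_enorm_toReal two_ne_zero ENNReal.ofNat_ne_top] at h1
    simp only [ENNReal.toReal_ofNat] at h1
    rw [ENNReal.rpow_lt_top_iff_of_pos (by norm_num : (0:ℝ) < 1/2)] at h1
    simp [hd_def, show ((2:ℕ):ℝ) = (2:ℝ) by norm_num, ENNReal.rpow_natCast] at h1; exact h1
  have hμfin : IsFiniteMeasure μ := by
    constructor
    rw [hμ_def, withDensity_apply _ MeasurableSet.univ, setLIntegral_univ]
    exact hlt
  set M : ℝ := (μ Set.univ).toReal with hM_def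
  have hM0 : 0 ≤ M := ENNReal.toReal_nonneg
  set δ : ℝ := Real.sqrt (ε ^ 2 / (2 * (M + 1))) with hδ_def
  have hδpos : 0 < δ := Real.sqrt_pos.2 (by positivity)
  have hδsq : δ ^ 2 = ε ^ 2 / (2 * (M + 1)) := Real.sq_sqrt (by positivity)
  have hδ2 : δ ^ 2 * M < ε ^ 2 / 2 := by
    rw [hδsq]
    rw [div_mul_eq_mul_div, div_lt_div_iff₀ (by positivity) (by norm_num)]
    nlinarith [sq_nonneg ε, hε]
  obtain ⟨u, hu_sub, hu_small⟩ := exists_finset_compl_small μ hs hμs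
    (ε := ENNReal.ofReal (ε ^ 2 / 8)) (by positivity)
  obtain ⟨r, hrN, hr⟩ := exists_large_return u
    (fun t ht => hcirc (hu_sub ht)) hδpos N
  refine ⟨r, hrN, ?_⟩
  set g : ℂ → ℝ≥0∞ := fun z => (‖z ^ r - 1‖₊ : ℝ≥0∞) ^ (2 : ℕ) with hg_def
  have hgm : Measurable g := by
    apply Measurable.pow_const
    exact (((continuous_pow r).sub continuous_const).measurable.nnnorm).coe_nnreal_ennreal
  have key : ∫⁻ z, (‖(z ^ r - 1) * f z‖₊ : ℝ≥0∞) ^ (2:ℕ) ∂ν < ENNReal.ofReal (ε ^ 2) := by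
    have heq : ∫⁻ z, (‖(z ^ r - 1) * f z‖₊ : ℝ≥0∞) ^ (2:ℕ) ∂ν = ∫⁻ z, g z ∂μ := by
      rw [hμ_def, lintegral_withDensity_eq_lintegral_mul₀ hd hgm.aemeasurable]
      apply lintegral_congr
      intro z
      simp only [Pi.mul_apply, hd_def, hg_def, nnnorm_mul, ENNReal.coe_mul, mul_pow]
      ring
    rw [heq, ← lintegral_add_compl g u.measurableSet]
    have part1 : ∫⁻ z in (↑u : Set ℂ), g z ∂μ < ENNReal.ofReal (ε ^ 2 / 2) := by
      calc ∫⁻ z in (↑u : Set ℂ), g z ∂μ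
          ≤ ∫⁻ _ in (↑u : Set ℂ), ENNReal.ofReal (δ ^ 2) ∂μ := by
            apply setLIntegral_mono' u.measurableSet
            intro t ht
            have hb : ‖t ^ r - (1:ℂ)‖ < δ := hr t ht
            have : g t = ENNReal.ofReal (‖t ^ r - (1:ℂ)‖ ^ 2) := by
              rw [show g t = ((‖t ^ r - (1:ℂ)‖₊ : ℝ≥0∞)) ^ (2:ℕ) from rfl,
                ← enorm_eq_nnnorm, ← ofReal_norm, ← ENNReal.ofReal_pow (norm_nonneg _)]
            rw [this]
            exact ENNReal.ofReal_le_ofReal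
              (pow_le_pow_left₀ (norm_nonneg _) hb.le 2)
        _ = ENNReal.ofReal (δ ^ 2) * μ (↑u : Set ℂ) := setLIntegral_const _ _
        _ ≤ ENNReal.ofReal (δ ^ 2) * μ Set.univ :=
            mul_le_mul_right (measure_mono (Set.subset_univ _)) _
        _ < ENNReal.ofReal (ε ^ 2 / 2) := by
            rw [show μ Set.univ = ENNReal.ofReal M by
              rw [hM_def, ENNReal.ofReal_toReal (measure_ne_top μ _)]]
            rw [← ENNReal.ofReal_mul (by positivity)]
            exact ENNReal.ofReal_lt_ofReal_iff (by positivity) |>.2 hδ2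
    have part2 : ∫⁻ z in (↑u : Set ℂ)ᶜ, g z ∂μ < ENNReal.ofReal (ε ^ 2 / 2) := by
      have hae : ∀ᵐ z ∂(μ.restrict (↑u : Set ℂ)ᶜ), g z ≤ 4 := by
        have hs0 : (μ.restrict (↑u : Set ℂ)ᶜ) sᶜ = 0 :=
          le_antisymm (le_trans (Measure.restrict_le_self _) hμs.le) zero_le
        filter_upwards [(ae_iff.2 (by exact hs0) : ∀ᵐ z ∂(μ.restrict (↑u : Set ℂ)ᶜ), z ∈ s)]
          with z hz
        have h1 : ‖z‖ = 1 := hcirc hz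
        have h2 : ‖z ^ r - (1:ℂ)‖ ≤ 2 := by
          calc ‖z ^ r - (1:ℂ)‖ ≤ ‖z ^ r‖ + ‖(1:ℂ)‖ := norm_sub_le _ _
            _ = 2 := by rw [norm_pow, h1, one_pow, norm_one]; norm_num
        have : g z = ENNReal.ofReal (‖z ^ r - (1:ℂ)‖ ^ 2) := by
          rw [show g z = ((‖z ^ r - (1:ℂ)‖₊ : ℝ≥0∞)) ^ (2:ℕ) from rfl,
            ← enorm_eq_nnnorm, ← ofReal_norm, ← ENNReal.ofReal_pow (norm_nonneg _)]
        rw [this, show (4:ℝ≥0∞) = ENNReal.ofReal 4 by norm_num]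
        exact ENNReal.ofReal_le_ofReal (by nlinarith [norm_nonneg (z ^ r - (1:ℂ))])
      calc ∫⁻ z in (↑u : Set ℂ)ᶜ, g z ∂μ ≤ ∫⁻ _ in (↑u : Set ℂ)ᶜ, 4 ∂μ :=
            lintegral_mono_ae hae
        _ = 4 * μ (↑u : Set ℂ)ᶜ := setLIntegral_const _ _
        _ < 4 * ENNReal.ofReal (ε ^ 2 / 8) := by
            exact ENNReal.mul_lt_mul_right (by norm_num : (4:ℝ≥0∞) ≠ 0) (by norm_num : (4:ℝ≥0∞) ≠ ⊤) hu_small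
        _ = ENNReal.ofReal (ε ^ 2 / 2) := by
            rw [show (4:ℝ≥0∞) = ENNReal.ofReal 4 by norm_num,
              ← ENNReal.ofReal_mul (by norm_num)]
            congr 1
            ring
    calc ∫⁻ z in (↑u : Set ℂ), g z ∂μ + ∫⁻ z in (↑u : Set ℂ)ᶜ, g z ∂μ
        < ENNReal.ofReal (ε ^ 2 / 2) + ENNReal.ofReal (ε ^ 2 / 2) :=
          ENNReal.add_lt_add part1 part2
      _ = ENNReal.ofReal (ε ^ 2) := by
          rw [← ENNReal.ofReal_add (by positivity) (by positivity)]
          norm_num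
  rw [eLpNorm_eq_lintegral_rpow_enorm_toReal two_ne_zero ENNReal.ofNat_ne_top]
  simp only [ENNReal.toReal_ofNat]
  have hconv : ∀ x : ℝ≥0∞, x ^ (2:ℝ) = x ^ (2:ℕ) := fun x => by
    rw [show (2:ℝ) = ((2:ℕ):ℝ) by norm_num, ENNReal.rpow_natCast]
  simp_rw [hconv]
  calc (∫⁻ z, (‖(z ^ r - 1) * f z‖₊ : ℝ≥0∞) ^ (2:ℕ) ∂ν) ^ (1/2 : ℝ)
      < (ENNReal.ofReal (ε ^ 2)) ^ (1/2 : ℝ) := by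
        apply ENNReal.rpow_lt_rpow key (by norm_num)
    _ = ENNReal.ofReal ε := by
        rw [ENNReal.ofReal_rpow_of_pos (by positivity)]
        congr 1
        rw [← Real.sqrt_eq_rpow, Real.sqrt_sq hε.le]

section SchauderBound

variable {H : Type*} [NormedAddCommGroup H] [NormedSpace ℂ H] [CompleteSpace H]

lemma dist_apply_le_lp (a b : lp (fun _ : ℕ => H) ∞) (k : ℕ) :
    dist ((a : ℕ → H) k) ((b : ℕ → H) k) ≤ dist a b := by
  have h := lp.norm_apply_le_norm ENNReal.top_ne_zero (a - b) k
  rw [lp.coeFn_sub, Pi.sub_apply] at h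
  rwa [dist_eq_norm, dist_eq_norm]


noncomputable def basisSeqS (F : ℕ → H) : Submodule ℂ (lp (fun _ : ℕ => H) ∞) where
  carrier := {g | (g : ℕ → H) 0 = 0 ∧
        (∀ k, (g : ℕ → H) (k+1) - (g : ℕ → H) k ∈ (ℂ ∙ F k)) ∧
        ∃ x, Tendsto (g : ℕ → H) atTop (𝓝 x)}
  add_mem' := by
        rintro g h ⟨hg0, hgd, xg, hxg⟩ ⟨hh0, hhd, xh, hxh⟩
        refine ⟨?_, fun k => ?_, xg + xh, ?_⟩
        · rw [lp.coeFn_add, Pi.add_apply, hg0, hh0, add_zero]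
        · have heq : ((g + h : lp (fun _ : ℕ => H) ∞) : ℕ → H) (k+1)
              - ((g + h : lp (fun _ : ℕ => H) ∞) : ℕ → H) k
              = ((g : ℕ → H) (k+1) - (g : ℕ → H) k)
                + ((h : ℕ → H) (k+1) - (h : ℕ → H) k) := by
            rw [lp.coeFn_add, Pi.add_apply, Pi.add_apply]; abel
          rw [heq]
          exact Submodule.add_mem _ (hgd k) (hhd k)
        · rw [lp.coeFn_add]
          exact hxg.add hxh
  zero_mem' := by
        refine ⟨?_, fun k => ?_, 0, ?_⟩
        · rw [lp.coeFn_zero]; rfl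
        · rw [lp.coeFn_zero]
          simpa using Submodule.zero_mem _
        · rw [lp.coeFn_zero]
          exact tendsto_const_nhds
  smul_mem' := by
        rintro c g ⟨hg0, hgd, x, hx⟩
        refine ⟨?_, fun k => ?_, c • x, ?_⟩
        · rw [lp.coeFn_smul, Pi.smul_apply, hg0, smul_zero]
        · have heq : ((c • g : lp (fun _ : ℕ => H) ∞) : ℕ → H) (k+1)
              - ((c • g : lp (fun _ : ℕ => H) ∞) : ℕ → H) k
              = c • ((g : ℕ → H) (k+1) - (g : ℕ → H) k) := by
            rw [lp.coeFn_smul, Pi.smul_apply, Pi.smul_apply, smul_sub]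
          rw [heq]
          exact Submodule.smul_mem _ _ (hgd k)
        · rw [lp.coeFn_smul]
          exact hx.const_smul c

lemma mem_basisSeqS {F : ℕ → H} {g : lp (fun _ : ℕ => H) ∞} :
    g ∈ basisSeqS F ↔ ((g : ℕ → H) 0 = 0 ∧
      (∀ k, (g : ℕ → H) (k+1) - (g : ℕ → H) k ∈ (ℂ ∙ F k)) ∧
      ∃ x, Tendsto (g : ℕ → H) atTop (𝓝 x)) := Iff.rfl

lemma schauder_bound {F : ℕ → H} (hbasis : IsSchauderBasis F) :
    ∃ C : ℝ, 0 ≤ C ∧ ∀ (a : ℕ → ℂ) (x : H),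
      Tendsto (fun k => ∑ n ∈ Finset.range k, a n • F n) atTop (𝓝 x) →
      ∀ k, ‖∑ n ∈ Finset.range k, a n • F n‖ ≤ C * ‖x‖ := by
  classical
  have hev : ∀ k, Continuous (fun g : lp (fun _ : ℕ => H) ∞ => (g : ℕ → H) k) := by
    intro k
    apply (LipschitzWith.of_dist_le_mul (K := 1) ?_).continuous
    intro a b
    rw [NNReal.coe_one, one_mul]
    exact dist_apply_le_lp a b k
  have hclosed : IsClosed ((basisSeqS F) : Set (lp (fun _ : ℕ => H) ∞)) := by
    have h1 : IsClosed {g : lp (fun _ : ℕ => H) ∞ | (g : ℕ → H) 0 = 0} :=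
      isClosed_singleton.preimage (hev 0)
    have h2 : IsClosed {g : lp (fun _ : ℕ => H) ∞ |
        ∀ k, (g : ℕ → H) (k+1) - (g : ℕ → H) k ∈ (ℂ ∙ F k)} := by
      have : {g : lp (fun _ : ℕ => H) ∞ |
          ∀ k, (g : ℕ → H) (k+1) - (g : ℕ → H) k ∈ (ℂ ∙ F k)}
          = ⋂ k, (fun g : lp (fun _ : ℕ => H) ∞ =>
              (g : ℕ → H) (k+1) - (g : ℕ → H) k) ⁻¹' (ℂ ∙ F k) := by
        ext g; simp [Set.mem_iInter]
      rw [this]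
      exact isClosed_iInter fun k =>
        (Submodule.closed_of_finiteDimensional _).preimage ((hev (k+1)).sub (hev k))
    have h3 : IsClosed {g : lp (fun _ : ℕ => H) ∞ |
        ∃ x, Tendsto (g : ℕ → H) atTop (𝓝 x)} := by
      apply IsSeqClosed.isClosed
      intro gs g hgs hg
      suffices hc : CauchySeq (g : ℕ → H) by
        exact cauchySeq_tendsto_of_complete hc
      rw [Metric.cauchySeq_iff]
      intro ε hε
      obtain ⟨i, hi⟩ := (Metric.tendsto_atTop.1 hg) (ε/3) (by positivity)
      obtain ⟨x, hx⟩ := hgs i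
      obtain ⟨N, hN⟩ := Metric.cauchySeq_iff.1 hx.cauchySeq (ε/3) (by positivity)
      refine ⟨N, fun m hm n hn => ?_⟩
      have hgm : dist ((g : ℕ → H) m) ((gs i : ℕ → H) m) < ε/3 :=
        lt_of_le_of_lt (dist_apply_le_lp _ _ _) (by rw [dist_comm]; exact hi i le_rfl)
      have hgn : dist ((gs i : ℕ → H) n) ((g : ℕ → H) n) < ε/3 :=
        lt_of_le_of_lt (dist_apply_le_lp _ _ _) (hi i le_rfl)
      calc dist ((g : ℕ → H) m) ((g : ℕ → H) n)
          ≤ dist ((g : ℕ → H) m) ((gs i : ℕ → H) m)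
            + dist ((gs i : ℕ → H) m) ((gs i : ℕ → H) n)
            + dist ((gs i : ℕ → H) n) ((g : ℕ → H) n) := dist_triangle4 _ _ _ _
        _ < ε/3 + ε/3 + ε/3 := by
            gcongr
            exact hN m hm n hn
        _ = ε := by ring
    have hset : ((basisSeqS F) : Set (lp (fun _ : ℕ => H) ∞))
        = {g : lp (fun _ : ℕ => H) ∞ | (g : ℕ → H) 0 = 0}
          ∩ ({g : lp (fun _ : ℕ => H) ∞ | ∀ k, (g : ℕ → H) (k+1) - (g : ℕ → H) k ∈ (ℂ ∙ F k)}
          ∩ {g : lp (fun _ : ℕ => H) ∞ | ∃ x, Tendsto (g : ℕ → H) atTop (𝓝 x)}) := by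
      ext g
      simp only [SetLike.mem_coe, mem_basisSeqS, Set.mem_inter_iff, Set.mem_setOf_eq]
    rw [hset]
    exact h1.inter (h2.inter h3)
  haveI : CompleteSpace (basisSeqS F) := hclosed.completeSpace_coe
  -- the limits
  have Tlim : ∀ g : (basisSeqS F), Tendsto ((g : lp (fun _ : ℕ => H) ∞) : ℕ → H) atTop
      (𝓝 (limUnder atTop ((g : lp (fun _ : ℕ => H) ∞) : ℕ → H))) := by
    intro g
    obtain ⟨-, -, x, hx⟩ := mem_basisSeqS.1 g.2
    rwa [hx.limUnder_eq]
  -- coefficients of an element of (basisSeqS F)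
  have coeff : ∀ g : (basisSeqS F), ∃ a : ℕ → ℂ,
      ∀ k, ((g : lp (fun _ : ℕ => H) ∞) : ℕ → H) k = ∑ n ∈ Finset.range k, a n • F n := by
    intro g
    obtain ⟨h0, hd, -⟩ := mem_basisSeqS.1 g.2
    choose a ha using fun k => Submodule.mem_span_singleton.1 (hd k)
    refine ⟨a, fun k => ?_⟩
    induction k with
    | zero => simpa using h0
    | succ k ih =>
        rw [Finset.sum_range_succ, ← ih, ha k]
        abel
  set T : (basisSeqS F) →L[ℂ] H := LinearMap.mkContinuous
    { toFun := fun g => limUnder atTop ((g : lp (fun _ : ℕ => H) ∞) : ℕ → H)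
      map_add' := by
        intro g h
        have h1 := Tlim (g + h)
        rw [Submodule.coe_add, lp.coeFn_add] at h1
        exact tendsto_nhds_unique h1 ((Tlim g).add (Tlim h))
      map_smul' := by
        intro c g
        have h1 := Tlim (c • g)
        rw [Submodule.coe_smul, lp.coeFn_smul] at h1
        exact tendsto_nhds_unique h1 ((Tlim g).const_smul c) }
    1 (by
      intro g
      rw [one_mul]
      refine le_of_tendsto (Tlim g).norm (Eventually.of_forall fun k => ?_)
      exact lp.norm_apply_le_norm ENNReal.top_ne_zero _ k) with hT_def
  clear hclosed
  have hTapp : ∀ g : (basisSeqS F), T g = limUnder atTop ((g : lp (fun _ : ℕ => H) ∞) : ℕ → H) :=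
    fun g => rfl
  clear_value T
  clear hT_def
  -- build an element of (basisSeqS F) from a convergent expansion
  have build : ∀ (a : ℕ → ℂ) (x : H),
      Tendsto (fun k => ∑ n ∈ Finset.range k, a n • F n) atTop (𝓝 x) →
      ∃ g : (basisSeqS F), (((g : lp (fun _ : ℕ => H) ∞) : ℕ → H)
        = fun k => ∑ n ∈ Finset.range k, a n • F n) ∧ T g = x := by
    intro a x hx
    have hbdd : Memℓp (fun k => ∑ n ∈ Finset.range k, a n • F n) (∞ : ℝ≥0∞) :=
      memℓp_infty hx.norm.bddAbove_range
    set gl : lp (fun _ : ℕ => H) ∞ := ⟨fun k => ∑ n ∈ Finset.range k, a n • F n, hbdd⟩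
      with hgl_def
    have hcoe : (gl : ℕ → H) = fun k => ∑ n ∈ Finset.range k, a n • F n := rfl
    have hmem : gl ∈ (basisSeqS F) := by
      rw [mem_basisSeqS]
      refine ⟨by simp [hcoe], fun k => ?_, x, by rw [hcoe]; exact hx⟩
      rw [hcoe]
      refine Submodule.mem_span_singleton.2 ⟨a k, ?_⟩
      simp only
      rw [Finset.sum_range_succ]
      abel
    refine ⟨⟨gl, hmem⟩, hcoe, ?_⟩
    rw [hTapp, hcoe]
    exact hx.limUnder_eq
  -- bijectivity
  have hinj : Function.Injective T := by
    intro g h hgh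
    obtain ⟨a, ha⟩ := coeff g
    obtain ⟨b, hb⟩ := coeff h
    have hga : Tendsto (fun k => ∑ n ∈ Finset.range k, a n • F n) atTop (𝓝 (T g)) := by
      have := Tlim g
      rw [← hTapp] at this
      convert this using 1
      exact funext fun k => (ha k).symm
    have hgb : Tendsto (fun k => ∑ n ∈ Finset.range k, b n • F n) atTop (𝓝 (T g)) := by
      have := Tlim h
      rw [← hTapp, ← hgh] at this
      convert this using 1
      exact funext fun k => (hb k).symm
    obtain ⟨c, -, hcuniq⟩ := hbasis (T g)
    have hab : a = b := (hcuniq a hga).trans (hcuniq b hgb).symm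
    have : ((g : lp (fun _ : ℕ => H) ∞) : ℕ → H) = ((h : lp (fun _ : ℕ => H) ∞) : ℕ → H) := by
      funext k
      rw [ha k, hb k, hab]
    exact Subtype.ext (Subtype.ext this)
  have hsurj : Function.Surjective T := by
    intro x
    obtain ⟨a, ha, -⟩ := hbasis x
    obtain ⟨g, -, hgx⟩ := build a x ha
    exact ⟨g, hgx⟩
  set e : (basisSeqS F) ≃L[ℂ] H := ContinuousLinearEquiv.ofBijective T
    (LinearMap.ker_eq_bot.2 hinj) (LinearMap.range_eq_top.2 hsurj) with he_def
  clear_value e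
  letI : NormedSpace ℂ ↥(basisSeqS F) := Submodule.normedSpace (basisSeqS F)
  obtain ⟨C, hC0, hCle⟩ : ∃ C : ℝ, 0 ≤ C ∧ ∀ y : H, ‖e.symm y‖ ≤ C * ‖y‖ :=
    ⟨‖(e.symm : H →L[ℂ] (basisSeqS F))‖, ContinuousLinearMap.opNorm_nonneg _,
      fun y => (e.symm : H →L[ℂ] (basisSeqS F)).le_opNorm y⟩
  refine ⟨C, hC0, ?_⟩
  intro a x hx k
  obtain ⟨g, hgcoe, hgx⟩ := build a x hx
  have hex : e g = x := by
    rw [he_def]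
    rw [show ⇑(ContinuousLinearEquiv.ofBijective T (LinearMap.ker_eq_bot.2 hinj)
      (LinearMap.range_eq_top.2 hsurj)) = ⇑T from ContinuousLinearEquiv.coeFn_ofBijective _ _ _]
    exact hgx
  have hsymm : e.symm x = g := by
    rw [← hex, ContinuousLinearEquiv.symm_apply_apply]
  calc ‖∑ n ∈ Finset.range k, a n • F n‖
      = ‖((g : lp (fun _ : ℕ => H) ∞) : ℕ → H) k‖ := by rw [hgcoe]
    _ ≤ ‖(g : lp (fun _ : ℕ => H) ∞)‖ := lp.norm_apply_le_norm ENNReal.top_ne_zero _ k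
    _ = ‖e.symm x‖ := by rw [hsymm]; rfl
    _ ≤ C * ‖x‖ := hCle x

end SchauderBound

/-- For a finite discrete measure `ν` on the unit circle with infinite support,
any `f ∈ L²(ν)` and any bijection `σ : ℤ ≃ ℕ`, the sequence `n ↦ z ^ σ⁻¹(n) · f`
is never a Schauder basis of `L²(ν)`. -/
theorem zpow_mul_never_schauder_basis (ν : Measure ℂ) [IsFiniteMeasure ν]
    (hdiscrete : ∃ s : Set ℂ, s.Countable ∧ s ⊆ {z : ℂ | ‖z‖ = 1} ∧ ν sᶜ = 0)
    (hinf : {z : ℂ | ν {z} ≠ 0}.Infinite)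
    (σ : ℤ ≃ ℕ) (f : Lp ℂ 2 ν) (F : ℕ → Lp ℂ 2 ν)
    (hF : ∀ n, ⇑(F n) =ᵐ[ν] fun z : ℂ => z ^ (σ.symm n) * f z) :
    ¬ IsSchauderBasis F := by
  classical
  intro hbasis
  obtain ⟨s, hs_count, hs_circ, hs_null⟩ := hdiscrete
  obtain ⟨C, hC0, hbound⟩ := schauder_bound hbasis
  have hF0 : F (σ 0) = f := by
    apply Lp.ext
    filter_upwards [hF (σ 0)] with z hz
    rw [hz, Equiv.symm_apply_apply, zpow_zero, one_mul]
  have hf0 : f = 0 := by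
    have key : ∀ ε : ℝ, 0 < ε → ‖f‖ ≤ C * ε := by
      intro ε hε
      obtain ⟨r, hrB, hsmall⟩ := exists_large_small_diff ν hs_count hs_circ hs_null f hε
        ((Finset.range (σ 0 + 1)).sup (fun m => (σ.symm m).natAbs))
      have hσr : σ 0 < σ (r : ℤ) := by
        by_contra hle
        push_neg at hle
        have hmem : σ (r:ℤ) ∈ Finset.range (σ 0 + 1) := Finset.mem_range.2 (by omega)
        have h1 : (σ.symm (σ (r:ℤ))).natAbs
            ≤ (Finset.range (σ 0 + 1)).sup (fun m => (σ.symm m).natAbs) :=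
          Finset.le_sup (f := fun m => (σ.symm m).natAbs) hmem
        rw [Equiv.symm_apply_apply] at h1
        simp only [Int.natAbs_natCast] at h1
        omega
      set a : ℕ → ℂ := fun n =>
        (if n = σ (r:ℤ) then (1:ℂ) else 0) - (if n = σ 0 then (1:ℂ) else 0) with ha_def
      have hsum : ∀ k, ∑ n ∈ Finset.range k, a n • F n
          = (if σ (r:ℤ) < k then F (σ (r:ℤ)) else 0) - (if σ 0 < k then F (σ 0) else 0) := by
        intro k
        simp only [ha_def, sub_smul, ite_smul, one_smul, zero_smul, Finset.sum_sub_distrib]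
        congr 1 <;>
          · rw [Finset.sum_ite_eq' (Finset.range k)]
            simp [Finset.mem_range]
      have htend : Tendsto (fun k => ∑ n ∈ Finset.range k, a n • F n) atTop
          (𝓝 (F (σ (r:ℤ)) - F (σ 0))) := by
        apply tendsto_atTop_of_eventually_const (i₀ := σ (r:ℤ) + 1)
        intro k hk
        have hk1 : σ (r:ℤ) < k := by omega
        have hk2 : σ 0 < k := by omega
        rw [hsum k, if_pos hk1, if_pos hk2]
      have hb := hbound a _ htend (σ 0 + 1)
      rw [hsum, if_neg (by omega), if_pos (by omega), zero_sub, norm_neg] at hb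
      have hxε : ‖F (σ (r:ℤ)) - F (σ 0)‖ ≤ ε := by
        have hae : ⇑(F (σ (r:ℤ)) - F (σ 0)) =ᵐ[ν] fun z : ℂ => (z ^ r - 1) * f z := by
          filter_upwards [Lp.coeFn_sub (F (σ (r:ℤ))) (F (σ 0)), hF (σ (r:ℤ)), hF (σ 0)]
            with z h1 h2 h3
          rw [h1, Pi.sub_apply, h2, h3, Equiv.symm_apply_apply, Equiv.symm_apply_apply,
            zpow_zero, one_mul, zpow_natCast]
          ring
        rw [Lp.norm_def, eLpNorm_congr_ae hae]
        exact (ENNReal.toReal_lt_of_lt_ofReal hsmall).le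
      calc ‖f‖ = ‖F (σ 0)‖ := by rw [hF0]
        _ ≤ C * ‖F (σ (r:ℤ)) - F (σ 0)‖ := hb
        _ ≤ C * ε := mul_le_mul_of_nonneg_left hxε hC0
    have hle0 : ‖f‖ ≤ 0 := by
      apply le_of_forall_pos_le_add
      intro ε hε
      have hc1 : (0:ℝ) < C + 1 := by linarith
      have h1 := key (ε / (C + 1)) (by positivity)
      rw [zero_add]
      calc ‖f‖ ≤ C * (ε / (C + 1)) := h1
        _ = ε * (C / (C + 1)) := by ring
        _ ≤ ε * 1 := by
            apply mul_le_mul_of_nonneg_left _ hε.le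
            exact (div_le_one hc1).2 (by linarith)
        _ = ε := mul_one ε
    exact norm_le_zero_iff.1 hle0
  have hfz : ⇑f =ᵐ[ν] (0 : ℂ → ℂ) := by
    rw [hf0]
    exact Lp.coeFn_zero ℂ 2 ν
  have hFn0 : ∀ n, F n = (0 : Lp ℂ 2 ν) := by
    intro n
    apply Lp.ext
    filter_upwards [hF n, hfz, Lp.coeFn_zero ℂ 2 ν] with z h1 h2 h3
    rw [h1, h3]
    simp only [Pi.zero_apply] at h2 ⊢
    rw [h2, mul_zero]
  obtain ⟨a₀, -, huniq⟩ := hbasis 0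
  have h1 : Tendsto (fun k => ∑ n ∈ Finset.range k, (fun _ => (0:ℂ)) n • F n) atTop
      (𝓝 (0 : Lp ℂ 2 ν)) := by
    simp only [zero_smul, Finset.sum_const_zero]
    exact tendsto_const_nhds
  have h2 : Tendsto (fun k => ∑ n ∈ Finset.range k, (fun _ => (1:ℂ)) n • F n) atTop
      (𝓝 (0 : Lp ℂ 2 ν)) := by
    simp only [one_smul, hFn0, Finset.sum_const_zero]
    exact tendsto_const_nhds
  have e1 : (fun _ => (0:ℂ)) = a₀ := huniq _ h1
  have e2 : (fun _ => (1:ℂ)) = a₀ := huniq _ h2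
  have : (0:ℂ) = 1 := by
    have := e1.trans e2.symm
    exact congrFun this 0
  exact zero_ne_one this
end

section
/- Let ν be a finite positive discrete measure on the unit circle T with infinite support. Then the multiplication operator M_z on L²(T, ν) can never be written as a bilateral shift on a Schauder basis: there is no Schauder basis {ψ_n}_{n≥1} of L²(T, ν) and bijection σ: N → Z such that M_z ψ_{σ^{-1}(m)} = ψ_{σ^{-1}(m+1)} for all m ∈ Z. -/
open Filter Topology MeasureTheory

namespace SchauderAux

variable {H : Type*} [NormedAddCommGroup H] [NormedSpace ℂ H]

/-- Partial sums of an expansion. -/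
def PS (ψ : ℕ → H) (a : ℕ → ℂ) (k : ℕ) : H := ∑ n ∈ Finset.range k, a n • ψ n

variable {ψ : ℕ → H}

lemma PS_add (a b : ℕ → ℂ) (k : ℕ) : PS ψ (a + b) k = PS ψ a k + PS ψ b k := by
  simp [PS, add_smul, Finset.sum_add_distrib]

lemma PS_smul (t : ℂ) (a : ℕ → ℂ) (k : ℕ) : PS ψ (t • a) k = t • PS ψ a k := by
  simp [PS, Finset.smul_sum, smul_smul]

lemma PS_zero (k : ℕ) : PS ψ (0 : ℕ → ℂ) k = 0 := by simp [PS]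

lemma PS_neg (a : ℕ → ℂ) (k : ℕ) : PS ψ (-a) k = -PS ψ a k := by
  simp [PS, Finset.sum_neg_distrib]

lemma PS_sub (a b : ℕ → ℂ) (k : ℕ) : PS ψ (a - b) k = PS ψ a k - PS ψ b k := by
  simp [PS, sub_smul, Finset.sum_sub_distrib]

lemma PS_succ_sub (a : ℕ → ℂ) (n : ℕ) : PS ψ a (n + 1) - PS ψ a n = a n • ψ n := by
  simp [PS, Finset.sum_range_succ]

/-- The space of coefficient sequences whose partial sums converge. -/
structure Coef (ψ : ℕ → H) where
  a : ℕ → ℂ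
  conv : ∃ x, Tendsto (PS ψ a) atTop (𝓝 x)

namespace Coef

@[ext] lemma ext {c d : Coef ψ} (h : c.a = d.a) : c = d := by
  cases c; cases d; simpa using h

instance : Zero (Coef ψ) := ⟨⟨0, ⟨0, by
    have h : PS ψ (0 : ℕ → ℂ) = fun _ => (0 : H) := funext PS_zero
    rw [h]
    exact tendsto_const_nhds⟩⟩⟩

instance : Add (Coef ψ) :=
  ⟨fun c d => ⟨c.a + d.a, by
    obtain ⟨x, hx⟩ := c.conv
    obtain ⟨y, hy⟩ := d.conv
    exact ⟨x + y, ((hx.add hy).congr fun k => (PS_add c.a d.a k).symm)⟩⟩⟩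

instance : Neg (Coef ψ) :=
  ⟨fun c => ⟨-c.a, by
    obtain ⟨x, hx⟩ := c.conv
    exact ⟨-x, (hx.neg.congr fun k => (PS_neg c.a k).symm)⟩⟩⟩

instance : Sub (Coef ψ) :=
  ⟨fun c d => ⟨c.a - d.a, by
    obtain ⟨x, hx⟩ := c.conv
    obtain ⟨y, hy⟩ := d.conv
    exact ⟨x - y, ((hx.sub hy).congr fun k => (PS_sub c.a d.a k).symm)⟩⟩⟩

instance : SMul ℂ (Coef ψ) :=
  ⟨fun t c => ⟨t • c.a, by
    obtain ⟨x, hx⟩ := c.conv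
    exact ⟨t • x, ((hx.const_smul t).congr fun k => (PS_smul t c.a k).symm)⟩⟩⟩

@[simp] lemma zero_a : (0 : Coef ψ).a = 0 := rfl
@[simp] lemma add_a (c d : Coef ψ) : (c + d).a = c.a + d.a := rfl
@[simp] lemma neg_a (c : Coef ψ) : (-c).a = -c.a := rfl
@[simp] lemma sub_a (c d : Coef ψ) : (c - d).a = c.a - d.a := rfl
@[simp] lemma smul_a (t : ℂ) (c : Coef ψ) : (t • c).a = t • c.a := rfl

instance : AddCommGroup (Coef ψ) where
  add_assoc a b c := by ext; simp [add_assoc]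
  zero_add a := by ext; simp
  add_zero a := by ext; simp
  add_comm a b := by ext; simp [add_comm]
  neg_add_cancel a := by ext; simp
  sub_eq_add_neg a b := by ext; simp [sub_eq_add_neg]
  nsmul := nsmulRec
  zsmul := zsmulRec

instance : Module ℂ (Coef ψ) where
  one_smul c := by ext; simp
  mul_smul s t c := by ext; simp [mul_assoc]
  smul_zero t := by ext; simp
  smul_add t c d := by ext; simp [mul_add]
  add_smul s t c := by ext; simp [add_mul]
  zero_smul c := by ext; simp

lemma bddAbove (c : Coef ψ) : BddAbove (Set.range fun k => ‖PS ψ c.a k‖) := by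
  obtain ⟨x, hx⟩ := c.conv
  exact hx.norm.bddAbove_range

end Coef

variable (ψ) in
/-- The norm on the coefficient space, assuming no basis vector vanishes. -/
noncomputable def coefNorm (hψ : ∀ n, ψ n ≠ 0) : AddGroupNorm (Coef ψ) where
  toFun c := ⨆ k, ‖PS ψ c.a k‖
  map_zero' := by simp [PS_zero]
  add_le' c d := by
    refine ciSup_le fun k => ?_
    rw [Coef.add_a, PS_add]
    exact (norm_add_le _ _).trans
      (add_le_add (le_ciSup c.bddAbove k) (le_ciSup d.bddAbove k))
  neg' c := by
    simp only [Coef.neg_a, PS_neg, norm_neg]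
  eq_zero_of_map_eq_zero' c hc := by
    have h0 : ∀ k, ‖PS ψ c.a k‖ = 0 := by
      intro k
      have h1 : ‖PS ψ c.a k‖ ≤ 0 := hc ▸ le_ciSup c.bddAbove k
      exact le_antisymm h1 (norm_nonneg _)
    ext n
    have h2 : c.a n • ψ n = 0 := by
      have := PS_succ_sub (ψ := ψ) c.a n
      rw [norm_eq_zero.mp (h0 (n+1)), norm_eq_zero.mp (h0 n), sub_zero] at this
      exact this.symm
    rcases smul_eq_zero.mp h2 with h | h
    · simpa using h
    · exact absurd h (hψ n)

end SchauderAux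
namespace SchauderAux

variable {H : Type*} [NormedAddCommGroup H] [NormedSpace ℂ H] {ψ : ℕ → H}

noncomputable instance [hψ : Fact (∀ n, ψ n ≠ 0)] : NormedAddCommGroup (Coef ψ) :=
  (coefNorm ψ hψ.out).toNormedAddCommGroup

lemma Coef.norm_def [Fact (∀ n, ψ n ≠ 0)] (c : Coef ψ) :
    ‖c‖ = ⨆ k, ‖PS ψ c.a k‖ := rfl

lemma Coef.PS_le_norm [Fact (∀ n, ψ n ≠ 0)] (c : Coef ψ) (k : ℕ) :
    ‖PS ψ c.a k‖ ≤ ‖c‖ :=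
  le_ciSup c.bddAbove k

noncomputable instance [Fact (∀ n, ψ n ≠ 0)] : NormedSpace ℂ (Coef ψ) where
  norm_smul_le t c := by
    rw [Coef.norm_def, Coef.norm_def]
    refine ciSup_le fun k => ?_
    rw [Coef.smul_a, PS_smul, norm_smul]
    exact mul_le_mul_of_nonneg_left (le_ciSup c.bddAbove k) (norm_nonneg t)

instance [Fact (∀ n, ψ n ≠ 0)] [CompleteSpace H] : CompleteSpace (Coef ψ) := by
  apply Metric.complete_of_cauchySeq_tendsto
  intro c hc
  have hψn : ∀ n, ψ n ≠ 0 := Fact.out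
  have key : ∀ ε > (0:ℝ), ∃ N, ∀ i ≥ N, ∀ j ≥ N, ∀ k,
      ‖PS ψ (c i).a k - PS ψ (c j).a k‖ ≤ ε := by
    intro ε hε
    obtain ⟨N, hN⟩ := Metric.cauchySeq_iff.mp hc ε hε
    refine ⟨N, fun i hi j hj k => ?_⟩
    have h1 : ‖PS ψ ((c i - c j).a) k‖ ≤ ‖c i - c j‖ := Coef.PS_le_norm _ k
    rw [Coef.sub_a, PS_sub] at h1
    refine h1.trans ?_
    have := hN i hi j hj
    rw [dist_eq_norm] at this
    exact this.le
  have coefC : ∀ n, ∃ bn : ℂ, Tendsto (fun i => (c i).a n) atTop (𝓝 bn) := by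
    intro n
    apply cauchySeq_tendsto_of_complete
    rw [Metric.cauchySeq_iff]
    intro ε hε
    have hpos : 0 < ‖ψ n‖ := norm_pos_iff.mpr (hψn n)
    obtain ⟨N, hN⟩ := key (ε * ‖ψ n‖ / 4) (by positivity)
    refine ⟨N, fun i hi j hj => ?_⟩
    have h1 : ((c i).a n - (c j).a n) • ψ n
        = (PS ψ (c i).a (n+1) - PS ψ (c j).a (n+1)) - (PS ψ (c i).a n - PS ψ (c j).a n) := by
      rw [sub_smul, ← PS_succ_sub (ψ := ψ) (c i).a n, ← PS_succ_sub (ψ := ψ) (c j).a n]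
      abel
    have h2 : ‖((c i).a n - (c j).a n) • ψ n‖ ≤ ε * ‖ψ n‖ / 2 := by
      rw [h1]
      have h3 := hN i hi j hj (n+1)
      have h4 := hN i hi j hj n
      calc ‖(PS ψ (c i).a (n+1) - PS ψ (c j).a (n+1)) - (PS ψ (c i).a n - PS ψ (c j).a n)‖
          ≤ ‖PS ψ (c i).a (n+1) - PS ψ (c j).a (n+1)‖ + ‖PS ψ (c i).a n - PS ψ (c j).a n‖ :=
            norm_sub_le _ _
        _ ≤ ε * ‖ψ n‖ / 4 + ε * ‖ψ n‖ / 4 := add_le_add h3 h4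
        _ = ε * ‖ψ n‖ / 2 := by ring
    rw [norm_smul] at h2
    have h5 : ‖(c i).a n - (c j).a n‖ ≤ ε / 2 := by
      by_contra hcon
      push_neg at hcon
      nlinarith
    rw [Complex.dist_eq]
    calc ‖(c i).a n - (c j).a n‖ = ‖(c i).a n - (c j).a n‖ := rfl
      _ ≤ ε / 2 := h5
      _ < ε := by linarith
  choose b hb using coefC
  have hPSb : ∀ k : ℕ, Tendsto (fun j => PS ψ (c j).a k) atTop (𝓝 (PS ψ b k)) := by
    intro k
    unfold PS
    exact tendsto_finset_sum _ fun n _ => (hb n).smul_const (ψ n)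
  have key2 : ∀ ε > (0:ℝ), ∃ N, ∀ i ≥ N, ∀ k, ‖PS ψ (c i).a k - PS ψ b k‖ ≤ ε := by
    intro ε hε
    obtain ⟨N, hN⟩ := key ε hε
    refine ⟨N, fun i hi k => ?_⟩
    have hlim : Tendsto (fun j => ‖PS ψ (c i).a k - PS ψ (c j).a k‖) atTop
        (𝓝 ‖PS ψ (c i).a k - PS ψ b k‖) :=
      (tendsto_const_nhds.sub (hPSb k)).norm
    exact le_of_tendsto hlim (eventually_atTop.2 ⟨N, fun j hj => hN i hi j hj k⟩)
  have hbconv : ∃ x, Tendsto (PS ψ b) atTop (𝓝 x) := by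
    apply cauchySeq_tendsto_of_complete
    rw [Metric.cauchySeq_iff]
    intro ε hε
    obtain ⟨N, hN2⟩ := key2 (ε/4) (by positivity)
    obtain ⟨x, hx⟩ := (c N).conv
    obtain ⟨K, hK⟩ := Metric.cauchySeq_iff.mp hx.cauchySeq (ε/4) (by positivity)
    refine ⟨K, fun k hk l hl => ?_⟩
    have h1 := hN2 N le_rfl k
    have h2 := hN2 N le_rfl l
    have h3 := hK k hk l hl
    rw [dist_eq_norm] at h3 ⊢
    calc ‖PS ψ b k - PS ψ b l‖
        ≤ ‖PS ψ b k - PS ψ (c N).a k‖ + ‖PS ψ (c N).a k - PS ψ (c N).a l‖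
            + ‖PS ψ (c N).a l - PS ψ b l‖ := by
          have := norm_sub_le_norm_sub_add_norm_sub (PS ψ b k) (PS ψ (c N).a k) (PS ψ b l)
          have h7 := norm_sub_le_norm_sub_add_norm_sub (PS ψ (c N).a k) (PS ψ (c N).a l) (PS ψ b l)
          linarith
      _ ≤ ε/4 + ε/4 + ε/4 := by
          refine add_le_add (add_le_add ?_ h3.le) ?_
          · rw [norm_sub_rev]; exact h1
          · exact h2
      _ < ε := by linarith
  refine ⟨⟨b, hbconv⟩, ?_⟩
  rw [Metric.tendsto_atTop]
  intro ε hε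
  obtain ⟨N, hN⟩ := key2 (ε/2) (by positivity)
  refine ⟨N, fun i hi => ?_⟩
  have h1 : ‖c i - ⟨b, hbconv⟩‖ ≤ ε/2 := by
    rw [Coef.norm_def]
    refine ciSup_le fun k => ?_
    rw [Coef.sub_a, PS_sub]
    exact hN i hi k
  rw [dist_eq_norm]
  calc ‖c i - ⟨b, hbconv⟩‖ ≤ ε/2 := h1
    _ < ε := by linarith

theorem exists_bound [CompleteSpace H] (hψ : ∀ n, ψ n ≠ 0) (hb : IsSchauderBasis ψ) :
    ∃ C : ℝ, 0 < C ∧ ∀ (x : H) (a : ℕ → ℂ),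
      Tendsto (fun k => ∑ n ∈ Finset.range k, a n • ψ n) atTop (𝓝 x) →
      ∀ n, ‖a n • ψ n‖ ≤ C * ‖x‖ := by
  haveI : Fact (∀ n, ψ n ≠ 0) := ⟨hψ⟩
  have htendsto : ∀ c : Coef ψ, Tendsto (PS ψ c.a) atTop (𝓝 c.conv.choose) :=
    fun c => c.conv.choose_spec
  let Tlin : Coef ψ →ₗ[ℂ] H :=
    { toFun := fun c => c.conv.choose
      map_add' := fun c d => tendsto_nhds_unique (htendsto (c + d))
        (((htendsto c).add (htendsto d)).congr fun k => (PS_add _ _ k).symm)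
      map_smul' := fun t c => tendsto_nhds_unique (htendsto (t • c))
        (((htendsto c).const_smul t).congr fun k => (PS_smul t _ k).symm) }
  let T : Coef ψ →L[ℂ] H := Tlin.mkContinuous 1 (fun c => by
    rw [one_mul]
    exact le_of_tendsto (htendsto c).norm (Eventually.of_forall fun k => c.PS_le_norm k))
  have hTc : ∀ c : Coef ψ, Tendsto (PS ψ c.a) atTop (𝓝 (T c)) := htendsto
  have hker : T.ker = ⊥ := by
    rw [LinearMap.ker_eq_bot']
    intro c hc0
    rw [ContinuousLinearMap.coe_coe] at hc0
    obtain ⟨a0, ha0, huniq⟩ := hb 0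
    have h1 : c.a = a0 := by
      refine huniq c.a ?_
      have := hTc c
      rw [hc0] at this
      exact this
    have h2 : (0 : ℕ → ℂ) = a0 := by
      refine huniq 0 ?_
      exact (tendsto_const_nhds : Tendsto (fun _ : ℕ => (0:H)) atTop (𝓝 0)).congr
        fun k => by simp
    ext n
    rw [Coef.zero_a]
    rw [h1, ← h2]
  have hrange : T.range = ⊤ := by
    rw [LinearMap.range_eq_top]
    intro x
    obtain ⟨a, ha, -⟩ := hb x
    exact ⟨⟨a, ⟨x, ha⟩⟩, tendsto_nhds_unique (hTc ⟨a, ⟨x, ha⟩⟩) ha⟩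
  let e := ContinuousLinearEquiv.ofBijective T hker hrange
  refine ⟨2 * ‖(e.symm : H →L[ℂ] Coef ψ)‖ + 1, by positivity, ?_⟩
  intro x a ha n
  let ca : Coef ψ := ⟨a, ⟨x, ha⟩⟩
  have hex : e ca = x := tendsto_nhds_unique (hTc ca) ha
  have hsymm : e.symm x = ca := by rw [← hex, ContinuousLinearEquiv.symm_apply_apply]
  have hnorm : ‖ca‖ ≤ ‖(e.symm : H →L[ℂ] Coef ψ)‖ * ‖x‖ := by
    have := (e.symm : H →L[ℂ] Coef ψ).le_opNorm x
    rw [ContinuousLinearEquiv.coe_coe, hsymm] at this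
    exact this
  have h2 : ‖a n • ψ n‖ ≤ 2 * ‖ca‖ := by
    have h3 : a n • ψ n = PS ψ a (n+1) - PS ψ a n := (PS_succ_sub a n).symm
    rw [h3]
    have h4 : ‖PS ψ a (n+1)‖ ≤ ‖ca‖ := ca.PS_le_norm (n+1)
    have h5 : ‖PS ψ a n‖ ≤ ‖ca‖ := ca.PS_le_norm n
    calc ‖PS ψ a (n+1) - PS ψ a n‖ ≤ ‖PS ψ a (n+1)‖ + ‖PS ψ a n‖ := norm_sub_le _ _
      _ ≤ 2 * ‖ca‖ := by linarith
  calc ‖a n • ψ n‖ ≤ 2 * ‖ca‖ := h2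
    _ ≤ 2 * (‖(e.symm : H →L[ℂ] Coef ψ)‖ * ‖x‖) := by
        have h6 : (0:ℝ) ≤ 2 := by norm_num
        nlinarith [norm_nonneg ca]
    _ ≤ (2 * ‖(e.symm : H →L[ℂ] Coef ψ)‖ + 1) * ‖x‖ := by nlinarith [norm_nonneg x]

end SchauderAux
namespace SchauderAux

variable {H : Type*} [NormedAddCommGroup H] [NormedSpace ℂ H] {ψ : ℕ → H}

theorem separation [CompleteSpace H] (hψ : ∀ n, ψ n ≠ 0) (hb : IsSchauderBasis ψ) :
    ∃ C : ℝ, 0 < C ∧ ∀ m n, m ≠ n → ‖ψ m‖ ≤ C * ‖ψ m - ψ n‖ := by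
  obtain ⟨C, hC, hbd⟩ := exists_bound hψ hb
  refine ⟨C, hC, fun m n hmn => ?_⟩
  set a : ℕ → ℂ := fun i => (if i = m then (1:ℂ) else 0) - (if i = n then (1:ℂ) else 0) with ha
  have hterm : ∀ i, a i • ψ i = (if i = m then ψ m else 0) - (if i = n then ψ n else 0) := by
    intro i
    by_cases h1 : i = m <;> by_cases h2 : i = n
    · exact absurd (h1 ▸ h2 ▸ rfl : m = n) hmn
    · subst h1; simp [ha, hmn]
    · subst h2; simp [ha, h1]
    · simp [ha, h1, h2]
  have hsum : ∀ k, ∑ i ∈ Finset.range k, a i • ψ i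
      = (if m ∈ Finset.range k then ψ m else 0) - (if n ∈ Finset.range k then ψ n else 0) := by
    intro k
    simp_rw [hterm]
    rw [Finset.sum_sub_distrib, Finset.sum_ite_eq' (Finset.range k) m (fun _ => ψ m),
      Finset.sum_ite_eq' (Finset.range k) n (fun _ => ψ n)]
  have hconv : Tendsto (fun k => ∑ i ∈ Finset.range k, a i • ψ i) atTop (𝓝 (ψ m - ψ n)) := by
    apply Tendsto.congr' _ (tendsto_const_nhds : Tendsto (fun _ : ℕ => ψ m - ψ n) atTop _)
    filter_upwards [eventually_ge_atTop (max m n + 1)] with k hk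
    rw [hsum k]
    have hm : m ∈ Finset.range k := Finset.mem_range.2 (by omega)
    have hn : n ∈ Finset.range k := Finset.mem_range.2 (by omega)
    rw [if_pos hm, if_pos hn]
  have hB := hbd (ψ m - ψ n) a hconv m
  have ham : a m = 1 := by simp [ha, hmn]
  rw [ham, one_smul] at hB
  exact hB

end SchauderAux
open SchauderAux in
/-- For a finite discrete measure on the circle with infinite support, the multiplication
operator `M_z` on `L²(ν)` is never a bilateral shift on a Schauder basis. -/
theorem mul_op_never_shift_on_basis (ν : Measure ℂ) [IsFiniteMeasure ν]
    (hdiscrete : ∃ s : Set ℂ, s.Countable ∧ s ⊆ {z : ℂ | ‖z‖ = 1} ∧ ν sᶜ = 0)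
    (hinf : {z : ℂ | ν {z} ≠ 0}.Infinite)
    (Mz : Lp ℂ 2 ν →L[ℂ] Lp ℂ 2 ν)
    (hMz : ∀ g : Lp ℂ 2 ν, ⇑(Mz g) =ᵐ[ν] fun z : ℂ => z * g z) :
    ¬ ∃ (ψ : ℕ → Lp ℂ 2 ν) (σ : ℕ ≃ ℤ), IsSchauderBasis ψ ∧
        ∀ m : ℤ, Mz (ψ (σ.symm m)) = ψ (σ.symm (m + 1)) := by
  rintro ⟨ψ, σ, hbasis, hshift⟩
  obtain ⟨s, hs₁, hs₂, hs₃⟩ := hdiscrete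
  -- a.e. every point is on the circle
  have hae : ∀ᵐ z ∂ν, ‖z‖ = 1 := by
    rw [ae_iff]
    refine measure_mono_null ?_ hs₃
    intro z hz
    exact fun hzs => hz (hs₂ hzs)
  -- Mz is isometric
  have hMznorm : ∀ g : Lp ℂ 2 ν, ‖Mz g‖ = ‖g‖ := by
    intro g
    rw [Lp.norm_def, Lp.norm_def]
    congr 1
    calc eLpNorm (⇑(Mz g)) 2 ν = eLpNorm (fun z : ℂ => z * g z) 2 ν :=
          eLpNorm_congr_ae (hMz g)
      _ = eLpNorm (⇑g) 2 ν := by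
          refine eLpNorm_congr_norm_ae ?_
          filter_upwards [hae] with z hz
          rw [norm_mul, hz, one_mul]
  set f : Lp ℂ 2 ν := ψ (σ.symm 0) with hfdef
  -- all basis vectors have the same norm
  have hψm : ∀ m : ℤ, ‖ψ (σ.symm m)‖ = ‖f‖ := by
    intro m
    induction m using Int.induction_on with
    | zero => rfl
    | succ k ih => rw [← hshift (k : ℤ), hMznorm]; exact ih
    | pred k ih =>
        have h1 := hshift (-(k : ℤ) - 1)
        have h2 : (-(k:ℤ) - 1) + 1 = -(k:ℤ) := by ring
        rw [h2] at h1
        rw [← h1, hMznorm] at ih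
        exact ih
  have hψn : ∀ n : ℕ, ‖ψ n‖ = ‖f‖ := by
    intro n
    have := hψm (σ n)
    rwa [Equiv.symm_apply_apply] at this
  -- f ≠ 0
  have hf0 : f ≠ 0 := by
    intro h0
    obtain ⟨a0, -, huniq⟩ := hbasis 0
    have e1 : (fun _ : ℕ => (0:ℂ)) = a0 := by
      refine huniq _ ?_
      exact (tendsto_const_nhds : Tendsto (fun _ : ℕ => (0 : Lp ℂ 2 ν)) atTop (𝓝 0)).congr
        fun k => by simp
    have e2 : (Pi.single (σ.symm 0) (1:ℂ) : ℕ → ℂ) = a0 := by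
      refine huniq _ ?_
      refine (tendsto_const_nhds : Tendsto (fun _ : ℕ => (0 : Lp ℂ 2 ν)) atTop (𝓝 0)).congr
        fun k => ?_
      rw [eq_comm]
      refine Finset.sum_eq_zero fun i _ => ?_
      by_cases hi : i = σ.symm 0
      · subst hi; rw [Pi.single_eq_same, one_smul, ← hfdef, h0]
      · rw [Pi.single_eq_of_ne hi, zero_smul]
    have : (Pi.single (σ.symm 0) (1:ℂ) : ℕ → ℂ) (σ.symm 0) = 0 := by
      rw [e2, ← e1]
    rw [Pi.single_eq_same] at this
    exact one_ne_zero this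
  have hfpos : (0:ℝ) < ‖f‖ := norm_pos_iff.mpr hf0
  have hψne : ∀ n, ψ n ≠ 0 := by
    intro n h
    apply hf0
    have := hψn n
    rw [h, norm_zero] at this
    exact norm_eq_zero.mp this.symm
  obtain ⟨C, hC, hsep⟩ := separation hψne hbasis
  -- the sequence of forward-shifted basis vectors
  set gj : ℕ → Lp ℂ 2 ν := fun j => ψ (σ.symm (j : ℤ)) with hgjdef
  have hgj_succ : ∀ j : ℕ, Mz (gj j) = gj (j + 1) := by
    intro j
    have := hshift (j : ℤ)
    rw [hgjdef]
    simpa [Int.natCast_succ] using this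
  have hgj_ae : ∀ j : ℕ, ⇑(gj j) =ᵐ[ν] fun z : ℂ => z ^ j * f z := by
    intro j
    induction j with
    | zero =>
        refine Filter.EventuallyEq.of_eq ?_
        funext z
        simp [hgjdef, hfdef]
    | succ j ih =>
        rw [← hgj_succ j]
        filter_upwards [hMz (gj j), ih] with z h1 h2
        rw [h1, h2]
        ring
  -- atoms
  set A : Set ℂ := {z : ℂ | ν {z} ≠ 0} with hAdef
  have hAs : A ⊆ s := by
    intro w hw
    by_contra hws
    exact hw (measure_mono_null (Set.singleton_subset_iff.2 hws) hs₃)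
  have hAcount : A.Countable := hs₁.mono hAs
  obtain ⟨u, hA⟩ := hAcount.exists_eq_range hinf.nonempty
  have hu_mem : ∀ i, u i ∈ A := by
    intro i; rw [hA]; exact Set.mem_range_self i
  have hatom : ∀ p : ℂ → Prop, (∀ᵐ z ∂ν, p z) → ∀ w ∈ A, p w := by
    intro p hp w hw
    by_contra hcon
    refine hw (measure_mono_null ?_ (ae_iff.mp hp))
    intro z hz
    rw [Set.mem_singleton_iff] at hz
    subst hz
    exact hcon
  have hcirc : ∀ w ∈ A, ‖w‖ = 1 := fun w hw => hs₂ (hAs hw)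
  have hνAc : ν Aᶜ = 0 := by
    have h1 : ν (s \ A) = 0 := by
      rw [measure_null_iff_singleton (hs₁.mono Set.diff_subset)]
      intro x hx
      by_contra hxc
      exact hx.2 hxc
    have h2 : Aᶜ ⊆ sᶜ ∪ (s \ A) := by
      intro z hz
      by_cases hzs : z ∈ s
      · exact Or.inr ⟨hzs, hz⟩
      · exact Or.inl hzs
    exact measure_mono_null h2 (measure_union_null hs₃ h1)
  have hae_A : ∀ᵐ z ∂ν, z ∈ A := by
    rw [ae_iff]
    exact hνAc
  -- pointwise values at atoms
  set r : ℕ → ℝ := fun i => ‖(f : ℂ → ℂ) (u i)‖ with hrdef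
  set F : ℕ → ℕ → ℂ := fun j i => (gj j : ℂ → ℂ) (u i) with hFdef
  have hFval : ∀ j i, F j i = (u i) ^ j * (f : ℂ → ℂ) (u i) := by
    intro j i
    exact hatom (fun z => (gj j : ℂ → ℂ) z = z ^ j * (f : ℂ → ℂ) z) (hgj_ae j) (u i) (hu_mem i)
  have hFnorm : ∀ j i, ‖F j i‖ = r i := by
    intro j i
    rw [hFval, norm_mul, norm_pow, hcirc (u i) (hu_mem i), one_pow, one_mul]
  -- compactness in the product space
  set K : Set (ℕ → ℂ) := Set.univ.pi fun i => Metric.closedBall (0:ℂ) (r i) with hKdef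
  have hK : IsCompact K := isCompact_univ_pi fun i => isCompact_closedBall _ _
  have hFK : ∀ j, F j ∈ K := by
    intro j i _
    rw [Metric.mem_closedBall, dist_zero_right, hFnorm]
  obtain ⟨hoo, hhK, φ, hφ, hFconv⟩ := hK.tendsto_subseq hFK
  -- the pointwise limit function
  classical
  set hlim : ℂ → ℂ := fun z => if hz : ∃ i, u i = z then hoo hz.choose else 0 with hlimdef
  have hptconv : ∀ w ∈ A, Tendsto (fun k => (gj (φ k) : ℂ → ℂ) w) atTop (𝓝 (hlim w)) := by
    intro w hw
    rw [hA] at hw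
    obtain ⟨i, hi⟩ := hw
    have hz : ∃ i, u i = w := ⟨i, hi⟩
    have hval : hlim w = hoo hz.choose := by rw [hlimdef]; exact dif_pos hz
    have hcoord : Tendsto (fun k => F (φ k) hz.choose) atTop (𝓝 (hoo hz.choose)) :=
      tendsto_pi_nhds.mp hFconv hz.choose
    have heq : ∀ k, F (φ k) hz.choose = (gj (φ k) : ℂ → ℂ) w := by
      intro k
      rw [hFdef]
      simp only []
      rw [hz.choose_spec]
    rw [hval]
    exact hcoord.congr heq
  have haeconv : ∀ᵐ z ∂ν, Tendsto (fun k => (gj (φ k) : ℂ → ℂ) z) atTop (𝓝 (hlim z)) := by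
    filter_upwards [hae_A] with z hz using hptconv z hz
  have hmeas : AEStronglyMeasurable hlim ν :=
    aestronglyMeasurable_of_tendsto_ae atTop (fun k => Lp.aestronglyMeasurable (gj (φ k))) haeconv
  have hdom : ∀ j : ℕ, ∀ᵐ z ∂ν, ‖(gj j : ℂ → ℂ) z‖ ≤ ‖(f : ℂ → ℂ) z‖ := by
    intro j
    filter_upwards [hgj_ae j, hae] with z h1 h2
    rw [h1, norm_mul, norm_pow, h2, one_pow, one_mul]
  have hlim_le : ∀ᵐ z ∂ν, ‖hlim z‖ ≤ ‖(f : ℂ → ℂ) z‖ := by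
    filter_upwards [haeconv, ae_all_iff.2 (fun k : ℕ => hdom (φ k))] with z h1 h2
    exact le_of_tendsto h1.norm (Eventually.of_forall fun k => h2 k)
  have hmemlp : MemLp hlim 2 ν :=
    ⟨hmeas, lt_of_le_of_lt (eLpNorm_mono_ae hlim_le)
      (by simpa using (Lp.memLp f).eLpNorm_lt_top)⟩
  -- uniform integrability from domination
  have hUI : UnifIntegrable (fun k => ⇑(gj (φ k))) 2 ν := by
    intro ε hε
    obtain ⟨δ, hδ, hδ'⟩ := MemLp.eLpNorm_indicator_le one_le_two ENNReal.ofNat_ne_top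
      (Lp.memLp f) hε
    refine ⟨δ, hδ, fun k t ht hμt => ?_⟩
    refine le_trans (eLpNorm_mono_ae ?_) (hδ' t ht hμt)
    filter_upwards [hdom (φ k)] with z hz
    by_cases hzt : z ∈ t
    · simpa [Set.indicator_apply, hzt] using hz
    · simp [Set.indicator_apply, hzt]
  have htendsto0 : Tendsto (fun k => eLpNorm ((fun z => (gj (φ k) : ℂ → ℂ) z) - hlim) 2 ν)
      atTop (𝓝 0) :=
    tendsto_Lp_finite_of_tendsto_ae one_le_two ENNReal.ofNat_ne_top
      (fun k => Lp.aestronglyMeasurable (gj (φ k))) hmemlp hUI haeconv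
  have hLp : Tendsto (fun k => gj (φ k)) atTop (𝓝 (hmemlp.toLp hlim)) :=
    Lp.tendsto_Lp_of_tendsto_eLpNorm hlim hmemlp htendsto0
  have hcauchy : CauchySeq (fun k => gj (φ k)) := hLp.cauchySeq
  -- pick two close distinct basis vectors
  have hεpos : (0:ℝ) < ‖f‖ / C := div_pos hfpos hC
  obtain ⟨N, hN⟩ := Metric.cauchySeq_iff.mp hcauchy (‖f‖ / C) hεpos
  have hclose := hN N le_rfl (N + 1) (Nat.le_succ N)
  set m : ℕ := σ.symm ((φ N : ℕ) : ℤ) with hmdef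
  set n : ℕ := σ.symm ((φ (N+1) : ℕ) : ℤ) with hndef
  have hmn : m ≠ n := by
    intro h
    have h1 : ((φ N : ℕ) : ℤ) = ((φ (N+1) : ℕ) : ℤ) := σ.symm.injective h
    have h2 : φ N = φ (N+1) := Int.natCast_inj.mp h1
    exact absurd h2 (ne_of_lt (hφ (Nat.lt_succ_self N)))
  have hlt : ‖ψ m - ψ n‖ < ‖f‖ / C := by
    rw [← dist_eq_norm]
    exact hclose
  have hge := hsep m n hmn
  rw [hψn m] at hge
  have : ‖f‖ < ‖f‖ := by
    calc ‖f‖ ≤ C * ‖ψ m - ψ n‖ := hge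
      _ < C * (‖f‖ / C) := by
          exact mul_lt_mul_of_pos_left hlt hC
      _ = ‖f‖ := by field_simp
  exact lt_irrefl _ this
end
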